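/- arXiv:1509.08879 — 3 statements merged into one kernel-verified Lean document; each statement's English description precedes it below -/
import Mathlib

section
/- Let ℓ ≥ 1 and let λ_{1,1}, …, λ_{ℓ,1} be nonzero real numbers. Set μ₀ = 1 and μ_m = ∏_{j=1}^{m} λ_{j,1} for 1 ≤ m ≤ ℓ, and define λ_{m,n} = μ_m / (μ_{n−1} μ_{m−n}) for 1 ≤ n ≤ m ≤ ℓ. Then these numbers satisfy the compatibility relations λ_{m,n} · λ_{m−n,p−n} = λ_{m,p} · λ_{p−1,n} for all indices with 1 ≤ n < p ≤ m ≤ ℓ. -/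
noncomputable section

/-- `μ_m = ∏_{j=1}^m λ_{j,1}` (so `μ₀ = 1`). -/
def muProd (lam1 : ℕ → ℝ) (m : ℕ) : ℝ := ∏ j ∈ Finset.Icc 1 m, lam1 j

/-- `λ_{m,n} = μ_m / (μ_{n-1} μ_{m-n})`. -/
def lamGen (lam1 : ℕ → ℝ) (m n : ℕ) : ℝ :=
  muProd lam1 m / (muProd lam1 (n - 1) * muProd lam1 (m - n))

lemma muProd_ne_zero (ℓ : ℕ) (lam1 : ℕ → ℝ)
    (hnz : ∀ j, 1 ≤ j → j ≤ ℓ → lam1 j ≠ 0) (k : ℕ) (hk : k ≤ ℓ) :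
    muProd lam1 k ≠ 0 := by
  unfold muProd
  exact Finset.prod_ne_zero_iff.2 fun j hj => by
    simp only [Finset.mem_Icc] at hj
    exact hnz j hj.1 (hj.2.trans hk)

/-- The amplitudes `λ_{m,n} = μ_m/(μ_{n-1} μ_{m-n})` built from nonzero `λ_{1,1}, …, λ_{ℓ,1}`
satisfy the compatibility relations
`λ_{m,n} λ_{m−n,p−n} = λ_{m,p} λ_{p−1,n}` for all `1 ≤ n < p ≤ m ≤ ℓ`. -/
theorem compatibility_of_lamGen (ℓ : ℕ) (hℓ : 1 ≤ ℓ) (lam1 : ℕ → ℝ)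
    (hnz : ∀ j, 1 ≤ j → j ≤ ℓ → lam1 j ≠ 0) :
    ∀ m n p : ℕ, 1 ≤ n → n < p → p ≤ m → m ≤ ℓ →
      lamGen lam1 m n * lamGen lam1 (m - n) (p - n) =
        lamGen lam1 m p * lamGen lam1 (p - 1) n := by
  intro m n p hn hnp hpm hml
  have h1 : m - n - (p - n) = m - p := by omega
  have h2 : p - 1 - n = p - n - 1 := by omega
  unfold lamGen
  rw [h1, h2]
  have hA := muProd_ne_zero ℓ lam1 hnz (n-1) (by omega)
  have hB := muProd_ne_zero ℓ lam1 hnz (m-n) (by omega)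
  have hC := muProd_ne_zero ℓ lam1 hnz (p-n-1) (by omega)
  have hD := muProd_ne_zero ℓ lam1 hnz (m-p) (by omega)
  have hE := muProd_ne_zero ℓ lam1 hnz (p-1) (by omega)
  field_simp


end
end

section
/- Let ℓ ≥ 1 and let λ_{m,n} (1 ≤ n ≤ m ≤ ℓ) be real amplitudes satisfying the compatibility relations λ_{m,n} λ_{m−n,p−n} = λ_{m,p} λ_{p−1,n} for all 1 ≤ n < p ≤ m ≤ ℓ. Then for every chain length N, both for periodic boundary conditions and for any special boundary conditions s = (c₁, c_N) with 0 ≤ c₁, c_N ≤ ℓ, the supercharge Q_λ of the M_ℓ model is nilpotent of order two: Q_λ ∘ Q_λ = 0. -/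
attribute [local instance 10] Classical.propDecidable

noncomputable section

/-- A configuration of `N` sites: `true` = occupied, `false` = empty. -/
abbrev Config (N : ℕ) := Fin N → Bool

/-- Extension of a configuration to all of `ℕ`, by empty sites outside the chain. -/
def extc {N : ℕ} (σ : Config N) (t : ℕ) : Bool :=
  if h : t < N then σ ⟨t, h⟩ else false

/-- The fermion number: the number of occupied sites. -/
def fermions {N : ℕ} (σ : Config N) : ℕ :=
  (Finset.univ.filter fun i => σ i = true).card

/-- Allowed configurations of the open chain of `N` sites with exclusion parameter `ℓ`
and special boundary conditions `(c₁, cN)`: no cluster is longer than `ℓ`, the cluster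
containing the first site (if occupied) has length at most `c₁`, and the cluster
containing the last site (if occupied) has length at most `cN`. -/
def OpenOK (N ℓ c₁ cN : ℕ) (σ : Config N) : Prop :=
  (∀ a : ℕ, ¬ ∀ k ≤ ℓ, extc σ (a + k) = true) ∧
  (¬ (c₁ + 1 ≤ N ∧ ∀ k ≤ c₁, extc σ k = true)) ∧
  (¬ (cN + 1 ≤ N ∧ ∀ k ≤ cN, extc σ (N - 1 - k) = true))

/-- Cyclic shift of a site of the closed chain by `k` steps. -/
def cyc {N : ℕ} (i : Fin N) (k : ℕ) : Fin N :=
  ⟨(i.1 + k) % N, Nat.mod_lt _ i.pos⟩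

/-- Allowed configurations of the closed chain of `N` sites with periodic boundary
conditions: the chain is not fully occupied and no maximal cyclic run of occupied
sites is longer than `ℓ`. -/
def PerOK (N ℓ : ℕ) (σ : Config N) : Prop :=
  ∀ i : Fin N, ∃ k ≤ ℓ, σ (cyc i k) = false

/-- The fermionic sign `(-1)^{#{j < i : σ j = 1}}`. -/
def sgn {N : ℕ} (σ : Config N) (i : Fin N) : ℂ :=
  (-1 : ℂ) ^ ((Finset.univ.filter fun j => j < i ∧ σ j = true).card)

/-- The Hilbert space `V_N`: complex functions on allowed configurations. -/
abbrev AState (N : ℕ) (OK : Config N → Prop) := {σ : Config N // OK σ} → ℂ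

/-- Matrix of the supercharge with amplitudes `A`, with particle insertion
restricted to the sublattice `S`: the entry `(τ, σ)` is the amplitude (with fermionic
sign) for obtaining `τ` from `σ` by occupying an empty site of `S`. -/
def QmatA (N : ℕ) (OK : Config N → Prop) (S : Fin N → Prop)
    (A : Config N → Fin N → ℂ) :
    Matrix {σ : Config N // OK σ} {σ : Config N // OK σ} ℂ := fun τ σ =>
  ∑ i : Fin N,
    if S i ∧ σ.1 i = false ∧ τ.1 = Function.update σ.1 i true
    then A σ.1 i * sgn σ.1 i else 0

/-- The supercharge with amplitudes `A` restricted to the sublattice `S`, as a linear map. -/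
def QopA (N : ℕ) (OK : Config N → Prop) (S : Fin N → Prop)
    (A : Config N → Fin N → ℂ) : AState N OK →ₗ[ℂ] AState N OK :=
  (QmatA N OK S A).mulVecLin

/-- The unit-coupling supercharge restricted to the sublattice `S`. -/
def Qop (N : ℕ) (OK : Config N → Prop) (S : Fin N → Prop) :
    AState N OK →ₗ[ℂ] AState N OK :=
  QopA N OK S fun _ _ => 1

/-- The subspace `V_{N,f}` of states supported on configurations with fermion number `f`. -/
def gradeV (N : ℕ) (OK : Config N → Prop) (f : ℕ) :
    Submodule ℂ (AState N OK) where
  carrier := {ψ | ∀ σ, fermions σ.1 ≠ f → ψ σ = 0}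
  add_mem' := by
    intro a b ha hb σ h
    show a σ + b σ = 0
    rw [ha σ h, hb σ h, add_zero]
  zero_mem' := by intro σ h; rfl
  smul_mem' := by
    intro c a ha σ h
    show c * a σ = 0
    rw [ha σ h, mul_zero]

/-- Length of the run of occupied sites immediately to the left of site `i` (open chain). -/
def lrunO {N : ℕ} (σ : Config N) (i : Fin N) : ℕ :=
  ((Finset.range N).filter fun r =>
    1 ≤ r ∧ r ≤ i.1 ∧ ∀ k, 1 ≤ k → k ≤ r → extc σ (i.1 - k) = true).card

/-- Length of the run of occupied sites immediately to the right of site `i` (open chain). -/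
def rrunO {N : ℕ} (σ : Config N) (i : Fin N) : ℕ :=
  ((Finset.range N).filter fun r =>
    1 ≤ r ∧ ∀ k, 1 ≤ k → k ≤ r → extc σ (i.1 + k) = true).card

/-- The amplitude `λ_{m(i,σ),n(i,σ)}` for inserting a particle at site `i` of the open
chain: after insertion, `i` is the `n`-th member of an `m`-cluster, with
`m = lrun + rrun + 1` and `n = lrun + 1`. -/
def AmpO {N : ℕ} (lam : ℕ → ℕ → ℝ) (σ : Config N) (i : Fin N) : ℂ :=
  ((lam (lrunO σ i + rrunO σ i + 1) (lrunO σ i + 1) : ℝ) : ℂ)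

/-- Length of the cyclic run of occupied sites immediately to the left of site `i`. -/
def lrunP {N : ℕ} (σ : Config N) (i : Fin N) : ℕ :=
  ((Finset.range N).filter fun r =>
    1 ≤ r ∧ ∀ k, 1 ≤ k → k ≤ r → σ (cyc i (N - k)) = true).card

/-- Length of the cyclic run of occupied sites immediately to the right of site `i`. -/
def rrunP {N : ℕ} (σ : Config N) (i : Fin N) : ℕ :=
  ((Finset.range N).filter fun r =>
    1 ≤ r ∧ ∀ k, 1 ≤ k → k ≤ r → σ (cyc i k) = true).card

/-- The amplitude `λ_{m(i,σ),n(i,σ)}` for inserting a particle at site `i` of the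
closed (periodic) chain. -/
def AmpP {N : ℕ} (lam : ℕ → ℕ → ℝ) (σ : Config N) (i : Fin N) : ℂ :=
  ((lam (lrunP σ i + rrunP σ i + 1) (lrunP σ i + 1) : ℝ) : ℂ)

section RunCard

open Finset

lemma filter_inst_congr {α : Type*} {p : α → Prop} (h1 h2 : DecidablePred p) (s : Finset α) :
    @Finset.filter α p h1 s = @Finset.filter α p h2 s := by
  ext x
  rw [@Finset.mem_filter _ _ h1, @Finset.mem_filter _ _ h2]

lemma runcard_eq {N L : ℕ} {P : ℕ → Prop}
    (hdc : ∀ r r', P r → 1 ≤ r' → r' ≤ r → P r')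
    (h1 : ∀ r, P r → 1 ≤ r)
    (hbound : ∀ r, P r → r < N)
    (hL : ∀ r, 1 ≤ r → r ≤ L → P r)
    (hL1 : ¬ P (L + 1)) :
    ((Finset.range N).filter P).card = L := by
  have hset : (Finset.range N).filter P = Finset.Icc 1 L := by
    ext r
    simp only [Finset.mem_filter, Finset.mem_range, Finset.mem_Icc]
    constructor
    · rintro ⟨hrN, hP⟩
      refine ⟨h1 r hP, ?_⟩
      by_contra h
      exact hL1 (hdc r (L + 1) hP (by omega) (by omega))
    · rintro ⟨h1r, hrL⟩
      have := hL r h1r hrL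
      exact ⟨hbound r this, this⟩
  rw [hset, Nat.card_Icc]
  omega

lemma runcard_spec {N L : ℕ} {P : ℕ → Prop}
    (hdc : ∀ r r', P r → 1 ≤ r' → r' ≤ r → P r')
    (h1 : ∀ r, P r → 1 ≤ r)
    (hbound : ∀ r, P r → r < N)
    (hcard : ((Finset.range N).filter P).card = L) :
    (∀ r, 1 ≤ r → r ≤ L → P r) ∧ ¬ P (L + 1) ∧ L ≤ N - 1 := by
  subst hcard
  have hsub : (Finset.range N).filter P ⊆ Finset.Ico 1 N := by
    intro r hr
    rw [Finset.mem_filter, Finset.mem_range] at hr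
    rw [Finset.mem_Ico]
    exact ⟨h1 r hr.2, hr.1⟩
  have hcardle : ((Finset.range N).filter P).card ≤ N - 1 := by
    have := Finset.card_le_card hsub
    rwa [Nat.card_Ico] at this
  by_cases hs : (Finset.range N).filter P = ∅
  · rw [hs]
    refine ⟨fun r h1r hr => by simp at hr; omega, ?_, by simp⟩
    simp only [Finset.card_empty, zero_add]
    intro hP1
    have h1m : (1 : ℕ) ∈ (Finset.range N).filter P := by
      rw [Finset.mem_filter, Finset.mem_range]
      exact ⟨hbound 1 hP1, hP1⟩
    rw [hs] at h1m
    simp at h1m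
  · have hne : ((Finset.range N).filter P).Nonempty := Finset.nonempty_iff_ne_empty.2 hs
    set M := ((Finset.range N).filter P).max' hne with hM
    have hmem : M ∈ (Finset.range N).filter P := Finset.max'_mem _ hne
    have hPM : P M := (Finset.mem_filter.1 hmem).2
    have hnM1 : ¬ P (M + 1) := by
      intro hPM1
      have hmem1 : M + 1 ∈ (Finset.range N).filter P := by
        rw [Finset.mem_filter, Finset.mem_range]
        exact ⟨hbound _ hPM1, hPM1⟩
      have := Finset.le_max' _ _ hmem1
      omega
    have hcard : ((Finset.range N).filter P).card = M :=
      runcard_eq hdc h1 hbound (fun r h1r hrM => hdc M r hPM h1r hrM) hnM1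
    rw [hcard]
    exact ⟨fun r h1r hr => hdc M r hPM h1r hr, hnM1, hcard ▸ hcardle⟩

end RunCard

section Extc

lemma extc_apply {N : ℕ} (σ : Config N) (i : Fin N) : extc σ i.1 = σ i := by
  simp [extc]

lemma extc_lt {N : ℕ} {σ : Config N} {t : ℕ} (h : extc σ t = true) : t < N := by
  by_contra h'
  rw [extc, dif_neg h'] at h
  exact Bool.false_ne_true h

lemma extc_update {N : ℕ} (σ : Config N) (i : Fin N) (v : Bool) (t : ℕ) :
    extc (Function.update σ i v) t = if t = i.1 then v else extc σ t := by
  rcases lt_or_ge t N with h | h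
  · rw [extc, dif_pos h, extc, dif_pos h]
    by_cases ht : t = i.1
    · have : (⟨t, h⟩ : Fin N) = i := Fin.ext ht
      rw [if_pos ht, this, Function.update_self]
    · rw [if_neg ht, Function.update_of_ne]
      intro he
      exact ht (congrArg Fin.val he)
  · have ht : t ≠ i.1 := by have := i.2; omega
    rw [extc, dif_neg (by omega), if_neg ht, extc, dif_neg (by omega)]

lemma extc_update_true {N : ℕ} {σ : Config N} {i : Fin N} {t : ℕ}
    (h : t = i.1 ∨ extc σ t = true) : extc (Function.update σ i true) t = true := by
  rw [extc_update]
  rcases h with h | h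
  · rw [if_pos h]
  · split_ifs <;> simp [h]

lemma extc_update_ne {N : ℕ} (σ : Config N) (i : Fin N) (v : Bool) {t : ℕ}
    (h : t ≠ i.1) : extc (Function.update σ i v) t = extc σ t := by
  rw [extc_update, if_neg h]

lemma update_apply_ne {N : ℕ} (σ : Config N) (i : Fin N) (v : Bool) {x : Fin N}
    (h : x ≠ i) : Function.update σ i v x = σ x := Function.update_of_ne h v σ

lemma update_apply_false {N : ℕ} {σ : Config N} {i x : Fin N}
    (h : Function.update σ i true x = false) : x ≠ i ∧ σ x = false := by
  by_cases hx : x = i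
  · rw [hx, Function.update_self] at h; exact absurd h (by simp)
  · rw [Function.update_of_ne hx] at h; exact ⟨hx, h⟩

end Extc

section Cyc

lemma cyc_val {N : ℕ} (i : Fin N) (k : ℕ) : (cyc i k).1 = (i.1 + k) % N := rfl

lemma cyc_zero {N : ℕ} (i : Fin N) : cyc i 0 = i := by
  apply Fin.ext
  rw [cyc_val, Nat.add_zero, Nat.mod_eq_of_lt i.2]

lemma cyc_N {N : ℕ} (i : Fin N) : cyc i N = i := by
  apply Fin.ext
  rw [cyc_val, Nat.add_mod_right, Nat.mod_eq_of_lt i.2]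

lemma cyc_add {N : ℕ} (i : Fin N) (k l : ℕ) : cyc (cyc i k) l = cyc i (k + l) := by
  apply Fin.ext
  rw [cyc_val, cyc_val, cyc_val, Nat.mod_add_mod, Nat.add_assoc]

lemma cyc_congr {N : ℕ} (i : Fin N) {k l : ℕ} (h : k % N = l % N) : cyc i k = cyc i l := by
  apply Fin.ext
  rw [cyc_val, cyc_val, Nat.add_mod, h, ← Nat.add_mod]

lemma cyc_eq_self_iff {N : ℕ} (i : Fin N) (k : ℕ) : cyc i k = i ↔ k % N = 0 := by
  constructor
  · intro h
    have hv : (i.1 + k) % N = i.1 := congrArg Fin.val h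
    have h2 : (i.1 + k) % N = (i.1 + k % N) % N := by
      rw [Nat.add_mod, Nat.mod_eq_of_lt i.2]
    have hk : k % N < N := Nat.mod_lt _ i.pos
    have hi : i.1 < N := i.2
    by_contra hne
    have h3 : (i.1 + k % N) % N = i.1 := by rw [← h2, hv]
    rcases lt_or_ge (i.1 + k % N) N with hc | hc
    · rw [Nat.mod_eq_of_lt hc] at h3; omega
    · have : (i.1 + k % N) - N < N := by omega
      rw [Nat.mod_eq_sub_mod hc, Nat.mod_eq_of_lt this] at h3
      omega
  · intro h
    have : k % N = 0 % N := by simpa using h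
    rw [cyc_congr i this, cyc_zero]

lemma cyc_exists {N : ℕ} {i j : Fin N} (h : i ≠ j) :
    ∃ k, 1 ≤ k ∧ k < N ∧ cyc j k = i := by
  have hc : cyc j ((i.1 + N - j.1) % N) = i := by
    apply Fin.ext
    rw [cyc_val, Nat.add_mod, Nat.mod_mod, ← Nat.add_mod]
    have hj : j.1 ≤ i.1 + N := by have := j.2; omega
    have heq : j.1 + (i.1 + N - j.1) = i.1 + N := by omega
    rw [heq, Nat.add_mod_right, Nat.mod_eq_of_lt i.2]
  refine ⟨(i.1 + N - j.1) % N, ?_, Nat.mod_lt _ j.pos, hc⟩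
  rcases Nat.eq_zero_or_pos ((i.1 + N - j.1) % N) with h0 | h0
  · exfalso
    rw [h0, cyc_zero] at hc
    exact h hc.symm
  · omega

end Cyc
section RunLemmas

lemma lrunO_spec {N : ℕ} (σ : Config N) (i : Fin N) :
    (∀ k, 1 ≤ k → k ≤ lrunO σ i → extc σ (i.1 - k) = true) ∧
    lrunO σ i ≤ i.1 ∧
    (lrunO σ i = i.1 ∨ extc σ (i.1 - (lrunO σ i + 1)) = false) := by
  generalize hL : lrunO σ i = L
  rw [lrunO, filter_inst_congr _ (fun _ => Classical.propDecidable _) _] at hL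
  obtain ⟨hall, hnext, -⟩ := runcard_spec
    (fun r r' hP h1 h2 => ⟨h1, le_trans h2 hP.2.1, fun k hk1 hk2 => hP.2.2 k hk1 (le_trans hk2 h2)⟩)
    (fun r hP => hP.1)
    (fun r hP => by have := i.2; omega)
    hL
  have hLi : L ≤ i.1 := by
    rcases Nat.eq_zero_or_pos L with h0 | h0
    · omega
    · exact (hall L h0 le_rfl).2.1
  refine ⟨fun k hk1 hk2 => (hall k hk1 hk2).2.2 k hk1 le_rfl, hLi, ?_⟩
  by_cases hLeq : L = i.1
  · exact Or.inl hLeq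
  · right
    by_contra hocc
    apply hnext
    refine ⟨by omega, by omega, fun k hk1 hk2 => ?_⟩
    rcases Nat.lt_or_ge k (L + 1) with hk | hk
    · exact (hall k hk1 (by omega)).2.2 k hk1 le_rfl
    · have : k = L + 1 := by omega
      subst this
      exact Bool.of_not_eq_false hocc

lemma rrunO_spec {N : ℕ} (σ : Config N) (i : Fin N) :
    (∀ k, 1 ≤ k → k ≤ rrunO σ i → extc σ (i.1 + k) = true) ∧
    extc σ (i.1 + (rrunO σ i + 1)) = false := by
  generalize hL : rrunO σ i = L
  rw [rrunO, filter_inst_congr _ (fun _ => Classical.propDecidable _) _] at hL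
  obtain ⟨hall, hnext, -⟩ := runcard_spec
    (fun r r' hP h1 h2 => ⟨h1, fun k hk1 hk2 => hP.2 k hk1 (le_trans hk2 h2)⟩)
    (fun r hP => hP.1)
    (fun r hP => by
      have := extc_lt (hP.2 r hP.1 le_rfl)
      omega)
    hL
  refine ⟨fun k hk1 hk2 => (hall k hk1 hk2).2 k hk1 le_rfl, ?_⟩
  by_contra hocc
  apply hnext
  refine ⟨by omega, fun k hk1 hk2 => ?_⟩
  rcases Nat.lt_or_ge k (L + 1) with hk | hk
  · exact (hall k hk1 (by omega)).2 k hk1 le_rfl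
  · have : k = L + 1 := by omega
    subst this
    exact Bool.of_not_eq_false hocc

lemma lrunP_spec {N : ℕ} {σ : Config N} {i : Fin N} (hσ : σ i = false) :
    (∀ k, 1 ≤ k → k ≤ lrunP σ i → σ (cyc i (N - k)) = true) ∧
    σ (cyc i (N - (lrunP σ i + 1))) = false ∧ lrunP σ i ≤ N - 1 := by
  generalize hL : lrunP σ i = L
  rw [lrunP, filter_inst_congr _ (fun _ => Classical.propDecidable _) _] at hL
  obtain ⟨hall, hnext, hle⟩ := runcard_spec
    (fun r r' hP h1 h2 => ⟨h1, fun k hk1 hk2 => hP.2 k hk1 (le_trans hk2 h2)⟩)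
    (fun r hP => hP.1)
    (fun r hP => by
      by_contra hc
      have hN : 0 < N := i.pos
      have := hP.2 N (by omega) (by omega)
      rw [Nat.sub_self, cyc_zero, hσ] at this
      exact Bool.false_ne_true this)
    hL
  refine ⟨fun k hk1 hk2 => (hall k hk1 hk2).2 k hk1 le_rfl, ?_, hle⟩
  by_contra hocc
  apply hnext
  refine ⟨by omega, fun k hk1 hk2 => ?_⟩
  rcases Nat.lt_or_ge k (L + 1) with hk | hk
  · exact (hall k hk1 (by omega)).2 k hk1 le_rfl
  · have : k = L + 1 := by omega
    subst this
    exact Bool.of_not_eq_false hocc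

lemma rrunP_spec {N : ℕ} {σ : Config N} {i : Fin N} (hσ : σ i = false) :
    (∀ k, 1 ≤ k → k ≤ rrunP σ i → σ (cyc i k) = true) ∧
    σ (cyc i (rrunP σ i + 1)) = false ∧ rrunP σ i ≤ N - 1 := by
  generalize hL : rrunP σ i = L
  rw [rrunP, filter_inst_congr _ (fun _ => Classical.propDecidable _) _] at hL
  obtain ⟨hall, hnext, hle⟩ := runcard_spec
    (fun r r' hP h1 h2 => ⟨h1, fun k hk1 hk2 => hP.2 k hk1 (le_trans hk2 h2)⟩)
    (fun r hP => hP.1)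
    (fun r hP => by
      by_contra hc
      have hN : 0 < N := i.pos
      have := hP.2 N (by omega) (by omega)
      rw [cyc_N, hσ] at this
      exact Bool.false_ne_true this)
    hL
  refine ⟨fun k hk1 hk2 => (hall k hk1 hk2).2 k hk1 le_rfl, ?_, hle⟩
  by_contra hocc
  apply hnext
  refine ⟨by omega, fun k hk1 hk2 => ?_⟩
  rcases Nat.lt_or_ge k (L + 1) with hk | hk
  · exact (hall k hk1 (by omega)).2 k hk1 le_rfl
  · have : k = L + 1 := by omega
    subst this
    exact Bool.of_not_eq_false hocc

lemma lrunO_eq {N : ℕ} (σ : Config N) (i : Fin N) (L : ℕ)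
    (h1 : ∀ k, 1 ≤ k → k ≤ L → extc σ (i.1 - k) = true)
    (h2 : L ≤ i.1)
    (h3 : L = i.1 ∨ extc σ (i.1 - (L + 1)) = false) :
    lrunO σ i = L := by
  rw [lrunO, filter_inst_congr _ (fun _ => Classical.propDecidable _) _]
  exact runcard_eq
    (fun r r' hP hr1 hr2 => ⟨hr1, le_trans hr2 hP.2.1, fun k hk1 hk2 => hP.2.2 k hk1 (le_trans hk2 hr2)⟩)
    (fun r hP => hP.1)
    (fun r hP => by have := i.2; omega)
    (fun r hr1 hr2 => ⟨hr1, le_trans hr2 h2, fun k hk1 hk2 => h1 k hk1 (le_trans hk2 hr2)⟩)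
    (by
      rintro ⟨-, hle, hall⟩
      rcases h3 with h3 | h3
      · omega
      · have := hall (L + 1) (by omega) le_rfl
        rw [h3] at this
        exact Bool.false_ne_true this)

lemma rrunO_eq {N : ℕ} (σ : Config N) (i : Fin N) (L : ℕ)
    (h1 : ∀ k, 1 ≤ k → k ≤ L → extc σ (i.1 + k) = true)
    (h2 : extc σ (i.1 + (L + 1)) = false) :
    rrunO σ i = L := by
  rw [rrunO, filter_inst_congr _ (fun _ => Classical.propDecidable _) _]
  exact runcard_eq
    (fun r r' hP hr1 hr2 => ⟨hr1, fun k hk1 hk2 => hP.2 k hk1 (le_trans hk2 hr2)⟩)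
    (fun r hP => hP.1)
    (fun r hP => by
      have := extc_lt (hP.2 r hP.1 le_rfl)
      omega)
    (fun r hr1 hr2 => ⟨hr1, fun k hk1 hk2 => h1 k hk1 (le_trans hk2 hr2)⟩)
    (by
      rintro ⟨-, hall⟩
      have := hall (L + 1) (by omega) le_rfl
      rw [h2] at this
      exact Bool.false_ne_true this)

lemma lrunP_eq {N : ℕ} {σ : Config N} {i : Fin N} (hσ : σ i = false) (L : ℕ)
    (h1 : ∀ k, 1 ≤ k → k ≤ L → σ (cyc i (N - k)) = true)
    (h2 : σ (cyc i (N - (L + 1))) = false) :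
    lrunP σ i = L := by
  rw [lrunP, filter_inst_congr _ (fun _ => Classical.propDecidable _) _]
  exact runcard_eq
    (fun r r' hP hr1 hr2 => ⟨hr1, fun k hk1 hk2 => hP.2 k hk1 (le_trans hk2 hr2)⟩)
    (fun r hP => hP.1)
    (fun r hP => by
      by_contra hc
      have hN : 0 < N := i.pos
      have := hP.2 N (by omega) (by omega)
      rw [Nat.sub_self, cyc_zero, hσ] at this
      exact Bool.false_ne_true this)
    (fun r hr1 hr2 => ⟨hr1, fun k hk1 hk2 => h1 k hk1 (le_trans hk2 hr2)⟩)
    (by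
      rintro ⟨-, hall⟩
      have := hall (L + 1) (by omega) le_rfl
      rw [h2] at this
      exact Bool.false_ne_true this)

lemma rrunP_eq {N : ℕ} {σ : Config N} {i : Fin N} (hσ : σ i = false) (L : ℕ)
    (h1 : ∀ k, 1 ≤ k → k ≤ L → σ (cyc i k) = true)
    (h2 : σ (cyc i (L + 1)) = false) :
    rrunP σ i = L := by
  rw [rrunP, filter_inst_congr _ (fun _ => Classical.propDecidable _) _]
  exact runcard_eq
    (fun r r' hP hr1 hr2 => ⟨hr1, fun k hk1 hk2 => hP.2 k hk1 (le_trans hk2 hr2)⟩)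
    (fun r hP => hP.1)
    (fun r hP => by
      by_contra hc
      have hN : 0 < N := i.pos
      have := hP.2 N (by omega) (by omega)
      rw [cyc_N, hσ] at this
      exact Bool.false_ne_true this)
    (fun r hr1 hr2 => ⟨hr1, fun k hk1 hk2 => h1 k hk1 (le_trans hk2 hr2)⟩)
    (by
      rintro ⟨-, hall⟩
      have := hall (L + 1) (by omega) le_rfl
      rw [h2] at this
      exact Bool.false_ne_true this)

end RunLemmas
section Sign

lemma sgn_count_update {N : ℕ} (σ : Config N) (i j : Fin N) (hij : i ≠ j) (hi : σ i = false) :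
    (Finset.univ.filter fun k => k < j ∧ Function.update σ i true k = true).card
      = (Finset.univ.filter fun k => k < j ∧ σ k = true).card
        + (if i < j then 1 else 0) := by
  by_cases hlt : i < j
  · rw [if_pos hlt]
    have hset : (Finset.univ.filter fun k => k < j ∧ Function.update σ i true k = true)
        = insert i (Finset.univ.filter fun k => k < j ∧ σ k = true) := by
      ext k
      simp only [Finset.mem_filter, Finset.mem_insert, Finset.mem_univ, true_and]
      constructor
      · rintro ⟨hkj, hk⟩
        by_cases hki : k = i
        · exact Or.inl hki
        · right
          rw [Function.update_of_ne hki] at hk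
          exact ⟨hkj, hk⟩
      · rintro (hki | ⟨hkj, hk⟩)
        · subst hki
          exact ⟨hlt, by rw [Function.update_self]⟩
        · refine ⟨hkj, ?_⟩
          by_cases hki : k = i
          · subst hki; rw [Function.update_self]
          · rw [Function.update_of_ne hki]; exact hk
    rw [hset, Finset.card_insert_of_notMem]
    intro hmem
    rw [Finset.mem_filter] at hmem
    rw [hmem.2.2] at hi
    simp at hi
  · rw [if_neg hlt, Nat.add_zero]
    congr 1
    apply Finset.filter_congr
    intro k _
    by_cases hkj : k < j
    · have hki : k ≠ i := by
        intro h
        subst h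
        exact hlt hkj
      simp [hkj, Function.update_of_ne hki]
    · simp [hkj]

lemma sgn_update {N : ℕ} (σ : Config N) (i j : Fin N) (hij : i ≠ j) (hi : σ i = false) :
    sgn (Function.update σ i true) j = sgn σ j * (if i < j then -1 else 1) := by
  rw [sgn, sgn, sgn_count_update σ i j hij hi, pow_add]
  by_cases hlt : i < j
  · rw [if_pos hlt, if_pos hlt]
    norm_num
  · rw [if_neg hlt, if_neg hlt]
    norm_num

lemma sgn_skew {N : ℕ} (σ : Config N) (i j : Fin N) (hij : i ≠ j)
    (hi : σ i = false) (hj : σ j = false) :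
    sgn (Function.update σ j true) i * sgn σ j
      = -(sgn (Function.update σ i true) j * sgn σ i) := by
  rw [sgn_update σ j i hij.symm hj, sgn_update σ i j hij hi]
  rcases lt_or_gt_of_ne hij with h | h
  · rw [if_neg (asymm h), if_pos h]
    ring
  · rw [if_pos h, if_neg (asymm h)]
    ring

end Sign

section Generic

lemma subtype_sum_eq {N : ℕ} (OK : Config N → Prop) (c : Config N) (hc : OK c)
    (f : Config N → ℂ) (hf : ∀ x, x ≠ c → f x = 0) :
    ∑ μ : {σ : Config N // OK σ}, f μ.1 = f c := by
  rw [Fintype.sum_eq_single (⟨c, hc⟩ : {σ : Config N // OK σ})]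
  intro x hx
  apply hf
  intro h
  apply hx
  exact Subtype.ext h

lemma Qsq_zero (N : ℕ) (OK : Config N → Prop) (S : Fin N → Prop) (A : Config N → Fin N → ℂ)
    (hdown : ∀ (σ : Config N) (i : Fin N), σ i = false →
      OK (Function.update σ i true) → OK σ)
    (hA : ∀ (σ : Config N) (i j : Fin N), i ≠ j → σ i = false → σ j = false →
      OK (Function.update (Function.update σ i true) j true) →
      A σ i * A (Function.update σ i true) j = A σ j * A (Function.update σ j true) i) :
    QopA N OK S A ∘ₗ QopA N OK S A = 0 := by
  rw [QopA, ← Matrix.mulVecLin_mul]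
  have hQ : QmatA N OK S A * QmatA N OK S A = 0 := by
    ext τ σ
    rw [Matrix.mul_apply, Matrix.zero_apply]
    -- the summand over intermediate states
    have hterm : ∀ μ : {x : Config N // OK x},
        QmatA N OK S A τ μ * QmatA N OK S A μ σ
          = ∑ i : Fin N, ∑ j : Fin N,
            (if S i ∧ μ.1 i = false ∧ τ.1 = Function.update μ.1 i true
              then A μ.1 i * sgn μ.1 i else 0) *
            (if S j ∧ σ.1 j = false ∧ μ.1 = Function.update σ.1 j true
              then A σ.1 j * sgn σ.1 j else 0) := by
      intro μ
      rw [QmatA, QmatA, Finset.sum_mul_sum]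
    rw [Finset.sum_congr rfl fun μ _ => hterm μ]
    rw [Finset.sum_comm]
    have hswap : ∀ i : Fin N,
        (∑ μ : {x : Config N // OK x}, ∑ j : Fin N,
          (if S i ∧ μ.1 i = false ∧ τ.1 = Function.update μ.1 i true
            then A μ.1 i * sgn μ.1 i else 0) *
          (if S j ∧ σ.1 j = false ∧ μ.1 = Function.update σ.1 j true
            then A σ.1 j * sgn σ.1 j else 0))
        = ∑ j : Fin N, ∑ μ : {x : Config N // OK x},
          (if S i ∧ μ.1 i = false ∧ τ.1 = Function.update μ.1 i true
            then A μ.1 i * sgn μ.1 i else 0) *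
          (if S j ∧ σ.1 j = false ∧ μ.1 = Function.update σ.1 j true
            then A σ.1 j * sgn σ.1 j else 0) := fun i => Finset.sum_comm
    rw [Finset.sum_congr rfl fun i _ => hswap i]
    -- now collapse the μ-sum
    set g : Fin N → Fin N → ℂ := fun i j =>
      if S i ∧ S j ∧ σ.1 j = false ∧ (Function.update σ.1 j true) i = false
          ∧ OK (Function.update σ.1 j true)
          ∧ τ.1 = Function.update (Function.update σ.1 j true) i true
        then A (Function.update σ.1 j true) i * sgn (Function.update σ.1 j true) i
          * (A σ.1 j * sgn σ.1 j) else 0 with hg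
    have hcollapse : ∀ i j : Fin N,
        (∑ μ : {x : Config N // OK x},
          (if S i ∧ μ.1 i = false ∧ τ.1 = Function.update μ.1 i true
            then A μ.1 i * sgn μ.1 i else 0) *
          (if S j ∧ σ.1 j = false ∧ μ.1 = Function.update σ.1 j true
            then A σ.1 j * sgn σ.1 j else 0)) = g i j := by
      intro i j
      by_cases hOK : OK (Function.update σ.1 j true)
      · refine (subtype_sum_eq OK (Function.update σ.1 j true) hOK
          (fun x => (if S i ∧ x i = false ∧ τ.1 = Function.update x i true
              then A x i * sgn x i else 0) *
            (if S j ∧ σ.1 j = false ∧ x = Function.update σ.1 j true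
              then A σ.1 j * sgn σ.1 j else 0))
          (fun x hx => by
            have hneg : ¬ (S j ∧ σ.1 j = false ∧ x = Function.update σ.1 j true) :=
              fun hcon => hx hcon.2.2
            simp only [if_neg hneg, mul_zero])).trans ?_
        · simp only [hg]
          beta_reduce
          by_cases h2 : S j ∧ σ.1 j = false
          · rw [if_pos (show S j ∧ σ.1 j = false ∧ True from ⟨h2.1, h2.2, trivial⟩)]
            by_cases h1 : S i ∧ (Function.update σ.1 j true) i = false
                ∧ τ.1 = Function.update (Function.update σ.1 j true) i true
            · rw [if_pos h1, if_pos ⟨h1.1, h2.1, h2.2, h1.2.1, hOK, h1.2.2⟩]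
            · rw [if_neg h1, zero_mul, if_neg]
              intro hcon
              exact h1 ⟨hcon.1, hcon.2.2.2.1, hcon.2.2.2.2.2⟩
          · rw [if_neg (show ¬ (S j ∧ σ.1 j = false ∧ True) from
                fun hcon => h2 ⟨hcon.1, hcon.2.1⟩), mul_zero, if_neg]
            intro hcon
            exact h2 ⟨hcon.2.1, hcon.2.2.1⟩
      · simp only [hg]
        rw [if_neg (fun hcon => hOK hcon.2.2.2.2.1)]
        apply Finset.sum_eq_zero
        intro μ _
        have hneg : ¬ (S j ∧ σ.1 j = false ∧ μ.1 = Function.update σ.1 j true) :=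
          fun hcon => hOK (hcon.2.2 ▸ μ.2)
        rw [if_neg hneg, mul_zero]
    rw [Finset.sum_congr rfl fun i _ => Finset.sum_congr rfl fun j _ => hcollapse i j]
    -- antisymmetry
    have hanti : ∀ i j : Fin N, g j i = -g i j := by
      intro i j
      have hcond : ∀ i' j' : Fin N,
          (S i' ∧ S j' ∧ σ.1 j' = false ∧ (Function.update σ.1 j' true) i' = false
            ∧ OK (Function.update σ.1 j' true)
            ∧ τ.1 = Function.update (Function.update σ.1 j' true) i' true)
          → (S j' ∧ S i' ∧ σ.1 i' = false ∧ (Function.update σ.1 i' true) j' = false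
            ∧ OK (Function.update σ.1 i' true)
            ∧ τ.1 = Function.update (Function.update σ.1 i' true) j' true) := by
        rintro i' j' ⟨hSi, hSj, hj, hi, hOK, hτ⟩
        obtain ⟨hne, hif⟩ := update_apply_false hi
        have hcomm : Function.update (Function.update σ.1 j' true) i' true
            = Function.update (Function.update σ.1 i' true) j' true :=
          Function.update_comm (Ne.symm hne) true true σ.1
        have hOK2 : OK (Function.update σ.1 i' true) := by
          apply hdown (Function.update σ.1 i' true) j'
          · rw [Function.update_of_ne (Ne.symm hne)]
            exact hj
          · rw [← hcomm, ← hτ]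
            exact τ.2
        refine ⟨hSj, hSi, hif, ?_, hOK2, by rw [hτ, hcomm]⟩
        rw [Function.update_of_ne (Ne.symm hne)]
        exact hj
      by_cases h : S i ∧ S j ∧ σ.1 j = false ∧ (Function.update σ.1 j true) i = false
          ∧ OK (Function.update σ.1 j true)
          ∧ τ.1 = Function.update (Function.update σ.1 j true) i true
      · simp only [hg]
        rw [if_pos h, if_pos (hcond i j h)]
        obtain ⟨hSi, hSj, hj, hi, hOK, hτ⟩ := h
        obtain ⟨hne, hif⟩ := update_apply_false hi
        have hAeq := hA σ.1 j i (Ne.symm hne) hj hif (by rw [← hτ]; exact τ.2)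
        have hsgn := sgn_skew σ.1 j i (Ne.symm hne) hj hif
        have hs2 : sgn (Function.update σ.1 i true) j * sgn σ.1 i
            = -(sgn (Function.update σ.1 j true) i * sgn σ.1 j) := by
          linear_combination hsgn
        -- goal: A (σ+i) j * sgn (σ+i) j * (A σ i * sgn σ i)
        --     = -(A (σ+j) i * sgn (σ+j) i * (A σ j * sgn σ j))
        have : A σ.1 j * A (Function.update σ.1 j true) i
            = A σ.1 i * A (Function.update σ.1 i true) j := hAeq
        calc A (Function.update σ.1 i true) j * sgn (Function.update σ.1 i true) j
              * (A σ.1 i * sgn σ.1 i)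
            = (A σ.1 i * A (Function.update σ.1 i true) j)
              * (sgn (Function.update σ.1 i true) j * sgn σ.1 i) := by ring
          _ = (A σ.1 j * A (Function.update σ.1 j true) i)
              * (sgn (Function.update σ.1 i true) j * sgn σ.1 i) := by rw [this]
          _ = (A σ.1 j * A (Function.update σ.1 j true) i)
              * (-(sgn (Function.update σ.1 j true) i * sgn σ.1 j)) := by rw [hs2]
          _ = -(A (Function.update σ.1 j true) i * sgn (Function.update σ.1 j true) i
              * (A σ.1 j * sgn σ.1 j)) := by ring
      · have h2 : ¬ (S j ∧ S i ∧ σ.1 i = false ∧ (Function.update σ.1 i true) j = false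
            ∧ OK (Function.update σ.1 i true)
            ∧ τ.1 = Function.update (Function.update σ.1 i true) j true) := by
          intro hcon
          exact h (hcond j i hcon)
        simp only [hg]
        rw [if_neg h, if_neg h2, neg_zero]
    have hT : (∑ i : Fin N, ∑ j : Fin N, g i j) = -(∑ i : Fin N, ∑ j : Fin N, g i j) := by
      conv_lhs => rw [Finset.sum_comm]
      rw [← Finset.sum_neg_distrib]
      apply Finset.sum_congr rfl
      intro i _
      rw [← Finset.sum_neg_distrib]
      apply Finset.sum_congr rfl
      intro j _
      exact hanti i j
    linear_combination (1/2 : ℂ) * hT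
  rw [hQ, Matrix.mulVecLin_zero]

end Generic
section Down

lemma extc_upd2_true {N : ℕ} {σ : Config N} {i j : Fin N} {t : ℕ}
    (h : t = i.1 ∨ t = j.1 ∨ extc σ t = true) :
    extc (Function.update (Function.update σ i true) j true) t = true := by
  apply extc_update_true
  rcases h with h | h | h
  · exact Or.inr (extc_update_true (Or.inl h))
  · exact Or.inl h
  · exact Or.inr (extc_update_true (Or.inr h))

lemma OpenOK_down (N ℓ c₁ cN : ℕ) (σ : Config N) (i : Fin N) (hi : σ i = false)
    (h : OpenOK N ℓ c₁ cN (Function.update σ i true)) : OpenOK N ℓ c₁ cN σ := by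
  obtain ⟨h1, h2, h3⟩ := h
  refine ⟨fun a ha => h1 a fun k hk => extc_update_true (Or.inr (ha k hk)),
    fun hcon => h2 ⟨hcon.1, fun k hk => extc_update_true (Or.inr (hcon.2 k hk))⟩,
    fun hcon => h3 ⟨hcon.1, fun k hk => extc_update_true (Or.inr (hcon.2 k hk))⟩⟩

lemma PerOK_down (N ℓ : ℕ) (σ : Config N) (i : Fin N) (hi : σ i = false)
    (h : PerOK N ℓ (Function.update σ i true)) : PerOK N ℓ σ := by
  intro p
  obtain ⟨k, hk, hv⟩ := h p
  exact ⟨k, hk, (update_apply_false hv).2⟩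

end Down

section AmpOpen

lemma ampO_lt {N ℓ : ℕ} (lam : ℕ → ℕ → ℝ)
    (hcompat : ∀ m n p : ℕ, 1 ≤ n → n < p → p ≤ m → m ≤ ℓ →
      lam m n * lam (m - n) (p - n) = lam m p * lam (p - 1) n)
    (σ : Config N) (i j : Fin N) (hlt : i.1 < j.1)
    (hi : σ i = false) (hj : σ j = false)
    (hcl : ∀ a : ℕ, ¬ ∀ k ≤ ℓ,
      extc (Function.update (Function.update σ i true) j true) (a + k) = true) :
    AmpO lam σ i * AmpO lam (Function.update σ i true) j
      = AmpO lam σ j * AmpO lam (Function.update σ j true) i := by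
  have hij : i ≠ j := fun h => by subst h; omega
  obtain ⟨ha1, ha0, ha2⟩ := lrunO_spec σ i
  obtain ⟨hb1, hb2⟩ := rrunO_spec σ i
  obtain ⟨hc1, hc0, hc2⟩ := lrunO_spec σ j
  obtain ⟨hd1, hd2⟩ := rrunO_spec σ j
  set a := lrunO σ i with hadef
  set b := rrunO σ i with hbdef
  set c := lrunO σ j with hcdef
  set d := rrunO σ j with hddef
  -- the right run of i stops before j
  have hbj : i.1 + b < j.1 := by
    by_contra hcon
    have hk := hb1 (j.1 - i.1) (by omega) (by omega)
    rw [show i.1 + (j.1 - i.1) = j.1 by omega, extc_apply, hj] at hk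
    exact Bool.false_ne_true hk
  rcases eq_or_lt_of_le (show i.1 + b + 1 ≤ j.1 by omega) with hmerge | hfar
  · -- merge case : j = i + b + 1
    have hm : a + b + d + 2 ≤ ℓ := by
      by_contra hml
      apply hcl (i.1 - a)
      intro k hk
      have hk' : k ≤ a + b + d + 1 := by omega
      apply extc_upd2_true
      rcases (show k < a ∨ k = a ∨ (a < k ∧ k ≤ a + b) ∨ k = a + b + 1
          ∨ (a + b + 1 < k ∧ k ≤ a + b + d + 1) by omega) with h | h | h | h | h
      · right; right
        have := ha1 (a - k) (by omega) (by omega)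
        rwa [show i.1 - (a - k) = i.1 - a + k by omega] at this
      · left; omega
      · right; right
        have := hb1 (k - a) (by omega) (by omega)
        rwa [show i.1 + (k - a) = i.1 - a + k by omega] at this
      · right; left; omega
      · right; right
        have := hd1 (k - a - b - 1) (by omega) (by omega)
        rwa [show j.1 + (k - a - b - 1) = i.1 - a + k by omega] at this
    have hc : c = b := by
      rw [hcdef]
      apply lrunO_eq σ j b
      · intro k hk1 hk2
        rw [show j.1 - k = i.1 + (b + 1 - k) by omega]
        exact hb1 (b + 1 - k) (by omega) (by omega)
      · omega
      · right
        rw [show j.1 - (b + 1) = i.1 by omega, extc_apply]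
        exact hi
    have hL1 : lrunO (Function.update σ i true) j = a + b + 1 := by
      apply lrunO_eq
      · intro k hk1 hk2
        apply extc_update_true
        rcases (show k ≤ b ∨ k = b + 1 ∨ (b + 2 ≤ k ∧ k ≤ a + b + 1) by omega)
          with h | h | h
        · right
          rw [show j.1 - k = i.1 + (b + 1 - k) by omega]
          exact hb1 (b + 1 - k) (by omega) (by omega)
        · left; omega
        · right
          rw [show j.1 - k = i.1 - (k - b - 1) by omega]
          exact ha1 (k - b - 1) (by omega) (by omega)
      · omega
      · by_cases hai : a = i.1
        · left; omega
        · right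
          rcases ha2 with h | h
          · exact absurd h hai
          · rw [show j.1 - (a + b + 1 + 1) = i.1 - (a + 1) by omega,
              extc_update_ne σ i true (by omega)]
            exact h
    have hR1 : rrunO (Function.update σ i true) j = d := by
      apply rrunO_eq
      · intro k hk1 hk2
        rw [extc_update_ne σ i true (by omega)]
        exact hd1 k hk1 hk2
      · rw [extc_update_ne σ i true (by omega)]
        exact hd2
    have hL2 : lrunO (Function.update σ j true) i = a := by
      apply lrunO_eq
      · intro k hk1 hk2
        rw [extc_update_ne σ j true (by omega)]
        exact ha1 k hk1 hk2
      · exact ha0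
      · by_cases hai : a = i.1
        · left; exact hai
        · right
          rcases ha2 with h | h
          · exact absurd h hai
          · rw [extc_update_ne σ j true (by omega)]
            exact h
    have hR2 : rrunO (Function.update σ j true) i = b + 1 + d := by
      apply rrunO_eq
      · intro k hk1 hk2
        apply extc_update_true
        rcases (show k ≤ b ∨ k = b + 1 ∨ (b + 2 ≤ k ∧ k ≤ b + 1 + d) by omega)
          with h | h | h
        · right; exact hb1 k hk1 (by omega)
        · left; omega
        · right
          rw [show i.1 + k = j.1 + (k - b - 1) by omega]
          exact hd1 (k - b - 1) (by omega) (by omega)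
      · rw [show i.1 + (b + 1 + d + 1) = j.1 + (d + 1) by omega,
          extc_update_ne σ j true (by omega)]
        exact hd2
    simp only [AmpO, hL1, hR1, hL2, hR2, ← hadef, ← hbdef, ← hcdef, ← hddef, hc]
    have hco := hcompat (a + b + d + 2) (a + 1) (a + b + 2) (by omega) (by omega)
      (by omega) hm
    rw [show a + b + d + 2 - (a + 1) = b + d + 1 by omega,
      show a + b + 2 - (a + 1) = b + 1 by omega,
      show a + b + 2 - 1 = a + b + 1 by omega] at hco
    have hreal : lam (a + b + 1) (a + 1) * lam (a + b + 1 + d + 1) (a + b + 1 + 1)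
        = lam (b + d + 1) (b + 1) * lam (a + (b + 1 + d) + 1) (a + 1) := by
      rw [show a + b + 1 + d + 1 = a + b + d + 2 by omega,
        show a + b + 1 + 1 = a + b + 2 by omega,
        show a + (b + 1 + d) + 1 = a + b + d + 2 by omega]
      linear_combination -hco
    exact_mod_cast congrArg (fun x : ℝ => (x : ℂ)) hreal
  · -- far case
    have hcfar : c + i.1 + b + 2 ≤ j.1 := by
      by_contra hcon
      have hk := hc1 (j.1 - (i.1 + b + 1)) (by omega) (by omega)
      rw [show j.1 - (j.1 - (i.1 + b + 1)) = i.1 + (b + 1) by omega, hb2] at hk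
      exact Bool.false_ne_true hk
    have hL1 : lrunO (Function.update σ i true) j = c := by
      apply lrunO_eq
      · intro k hk1 hk2
        rw [extc_update_ne σ i true (by omega)]
        exact hc1 k hk1 hk2
      · exact hc0
      · by_cases hcj : c = j.1
        · left; exact hcj
        · right
          rcases hc2 with h | h
          · exact absurd h hcj
          · rw [extc_update_ne σ i true (by omega)]
            exact h
    have hR1 : rrunO (Function.update σ i true) j = d := by
      apply rrunO_eq
      · intro k hk1 hk2
        rw [extc_update_ne σ i true (by omega)]
        exact hd1 k hk1 hk2
      · rw [extc_update_ne σ i true (by omega)]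
        exact hd2
    have hL2 : lrunO (Function.update σ j true) i = a := by
      apply lrunO_eq
      · intro k hk1 hk2
        rw [extc_update_ne σ j true (by omega)]
        exact ha1 k hk1 hk2
      · exact ha0
      · by_cases hai : a = i.1
        · left; exact hai
        · right
          rcases ha2 with h | h
          · exact absurd h hai
          · rw [extc_update_ne σ j true (by omega)]
            exact h
    have hR2 : rrunO (Function.update σ j true) i = b := by
      apply rrunO_eq
      · intro k hk1 hk2
        rw [extc_update_ne σ j true (by omega)]
        exact hb1 k hk1 hk2
      · rw [extc_update_ne σ j true (by omega)]
        exact hb2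
    simp only [AmpO, hL1, hR1, hL2, hR2, ← hadef, ← hbdef, ← hcdef, ← hddef]
    push_cast
    ring

lemma ampO_sym {N ℓ c₁ cN : ℕ} (lam : ℕ → ℕ → ℝ)
    (hcompat : ∀ m n p : ℕ, 1 ≤ n → n < p → p ≤ m → m ≤ ℓ →
      lam m n * lam (m - n) (p - n) = lam m p * lam (p - 1) n)
    (σ : Config N) (i j : Fin N) (hij : i ≠ j)
    (hi : σ i = false) (hj : σ j = false)
    (hOK : OpenOK N ℓ c₁ cN (Function.update (Function.update σ i true) j true)) :
    AmpO lam σ i * AmpO lam (Function.update σ i true) j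
      = AmpO lam σ j * AmpO lam (Function.update σ j true) i := by
  rcases lt_or_gt_of_ne (fun h : i.1 = j.1 => hij (Fin.ext h)) with h | h
  · exact ampO_lt lam hcompat σ i j h hi hj hOK.1
  · refine (ampO_lt lam hcompat σ j i h hj hi ?_).symm
    rw [Function.update_comm hij.symm]
    exact hOK.1

end AmpOpen
section AmpPer

lemma upd1_true {N : ℕ} {σ : Config N} {i x : Fin N} (h : x = i ∨ σ x = true) :
    Function.update σ i true x = true := by
  rcases h with h | h
  · subst h; rw [Function.update_self]
  · by_cases hx : x = i
    · subst hx; rw [Function.update_self]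
    · rw [Function.update_of_ne hx]; exact h

lemma upd2_true {N : ℕ} {σ : Config N} {i j x : Fin N}
    (h : x = i ∨ x = j ∨ σ x = true) :
    Function.update (Function.update σ i true) j true x = true := by
  apply upd1_true
  rcases h with h | h | h
  · exact Or.inr (upd1_true (Or.inl h))
  · exact Or.inl h
  · exact Or.inr (upd1_true (Or.inr h))

lemma cyc_eq_cyc_iff {N : ℕ} (i : Fin N) (s t : ℕ) :
    cyc i s = cyc i t ↔ s % N = t % N := by
  constructor
  · intro h
    have hv : (i.1 + s) % N = (i.1 + t) % N := congrArg Fin.val h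
    have : i.1 + s ≡ i.1 + t [MOD N] := hv
    exact Nat.ModEq.add_left_cancel' i.1 this
  · exact cyc_congr i

lemma cyc_ne_self {N : ℕ} (i : Fin N) {t : ℕ} (h1 : 1 ≤ t) (h2 : t ≤ N - 1) :
    cyc i t ≠ i := by
  intro h
  rw [cyc_eq_self_iff] at h
  have hN : 0 < N := i.pos
  rw [Nat.mod_eq_of_lt (by omega)] at h
  omega

lemma perok_notboth {N ℓ : ℕ} {σ : Config N} {i j : Fin N} (hij : i ≠ j)
    (hi : σ i = false) (hj : σ j = false)
    (hOK : PerOK N ℓ (Function.update (Function.update σ i true) j true))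
    (h1 : cyc i (rrunP σ i + 1) = j) (h2 : cyc j (rrunP σ j + 1) = i) : False := by
  obtain ⟨hb1, hb2, hbN⟩ := rrunP_spec hi
  obtain ⟨hd1, hd2, hdN⟩ := rrunP_spec hj
  set b := rrunP σ i with hbdef
  set d := rrunP σ j with hddef
  have hNpos : 0 < N := i.pos
  have hb1' : b + 1 ≤ N - 1 := by
    by_contra hcon
    have hbn : b + 1 = N := by omega
    rw [hbn, cyc_N] at h1
    exact hij h1
  have hd1' : d + 1 ≤ N - 1 := by
    by_contra hcon
    have hdn : d + 1 = N := by omega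
    rw [hdn, cyc_N] at h2
    exact hij h2.symm
  have hN : b + d + 2 = N := by
    have hcyc : cyc i ((b + 1) + (d + 1)) = i := by
      rw [← cyc_add, h1, h2]
    rw [cyc_eq_self_iff] at hcyc
    obtain ⟨m, hm⟩ := Nat.dvd_of_mod_eq_zero hcyc
    rcases Nat.lt_or_ge m 2 with h | h
    · interval_cases m <;> omega
    · have := Nat.mul_le_mul_left N h
      omega
  have hall : ∀ p : Fin N, Function.update (Function.update σ i true) j true p = true := by
    intro p
    by_cases hp : p = i
    · exact upd2_true (Or.inl hp)
    · obtain ⟨t, ht1, htN, hct⟩ := cyc_exists hp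
      apply upd2_true
      rcases (show t ≤ b ∨ t = b + 1 ∨ (b + 2 ≤ t ∧ t ≤ b + d + 1) by omega)
        with h | h | h
      · right; right
        rw [← hct]
        exact hb1 t ht1 h
      · right; left
        rw [← hct, h, h1]
      · right; right
        rw [← hct, show t = b + 1 + (t - b - 1) by omega, ← cyc_add, h1]
        exact hd1 (t - b - 1) (by omega) (by omega)
  obtain ⟨k, hk, hfalse⟩ := hOK i
  rw [hall] at hfalse
  simp at hfalse

lemma ampP_main {N ℓ : ℕ} (lam : ℕ → ℕ → ℝ)
    (hcompat : ∀ m n p : ℕ, 1 ≤ n → n < p → p ≤ m → m ≤ ℓ →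
      lam m n * lam (m - n) (p - n) = lam m p * lam (p - 1) n)
    (σ : Config N) (i j : Fin N) (hij : i ≠ j)
    (hi : σ i = false) (hj : σ j = false)
    (hnm : cyc j (rrunP σ j + 1) ≠ i)
    (hOK : PerOK N ℓ (Function.update (Function.update σ i true) j true)) :
    AmpP lam σ i * AmpP lam (Function.update σ i true) j
      = AmpP lam σ j * AmpP lam (Function.update σ j true) i := by
  obtain ⟨ha1, ha2, haN⟩ := lrunP_spec hi
  obtain ⟨hb1, hb2, hbN⟩ := rrunP_spec hi
  obtain ⟨hc1, hc2, hcN⟩ := lrunP_spec hj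
  obtain ⟨hd1, hd2, hdN⟩ := rrunP_spec hj
  set a := lrunP σ i with hadef
  set b := rrunP σ i with hbdef
  set c := lrunP σ j with hcdef
  set d := rrunP σ j with hddef
  have hNpos : 0 < N := i.pos
  have hsij : Function.update σ i true j = σ j :=
    Function.update_of_ne (Ne.symm hij) true σ
  have hsji : Function.update σ j true i = σ i :=
    Function.update_of_ne hij true σ
  by_cases hme : cyc i (b + 1) = j
  · -- merge case
    have hb1' : b + 1 ≤ N - 1 := by
      by_contra hcon
      have hbn : b + 1 = N := by omega
      rw [hbn, cyc_N] at hme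
      exact hij hme
    have habN : a + b + 2 ≤ N := by
      by_contra hcon
      have hk := ha1 (N - b - 1) (by omega) (by omega)
      rw [show N - (N - b - 1) = b + 1 by omega, hme, hj] at hk
      exact Bool.false_ne_true hk
    have hd1' : d + 1 ≤ N - 1 := by
      by_contra hcon
      obtain ⟨t, ht1, htN, hct⟩ := cyc_exists hij
      have := hd1 t ht1 (by omega)
      rw [hct, hi] at this
      exact Bool.false_ne_true this
    have hNne : a + b + 3 ≤ N := by
      by_contra hcon
      have hNval : N = a + b + 2 := by omega
      have hda : d = a := by
        rw [hddef]
        apply rrunP_eq hj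
        · intro k hk1 hk2
          rw [← hme, cyc_add, show b + 1 + k = N - (a + 1 - k) by omega]
          exact ha1 (a + 1 - k) (by omega) (by omega)
        · rw [← hme, cyc_add, show b + 1 + (a + 1) = N by omega, cyc_N]
          exact hi
      apply hnm
      rw [hda, ← hme, cyc_add, show b + 1 + (a + 1) = N by omega, cyc_N]
    have hm : a + b + d + 2 ≤ ℓ := by
      by_contra hml
      obtain ⟨k, hk, hfalse⟩ := hOK (cyc i (N - a))
      rw [cyc_add] at hfalse
      have hk' : k ≤ a + b + d + 1 := by omega
      have : Function.update (Function.update σ i true) j true (cyc i (N - a + k))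
          = true := by
        apply upd2_true
        rcases (show k < a ∨ k = a ∨ (a < k ∧ k ≤ a + b) ∨ k = a + b + 1
            ∨ (a + b + 1 < k ∧ k ≤ a + b + d + 1) by omega) with h | h | h | h | h
        · right; right
          rw [show N - a + k = N - (a - k) by omega]
          exact ha1 (a - k) (by omega) (by omega)
        · left
          rw [show N - a + k = N by omega, cyc_N]
        · right; right
          rw [show N - a + k = N + (k - a) by omega,
            cyc_congr i (Nat.add_mod_left N (k - a))]
          exact hb1 (k - a) (by omega) (by omega)
        · right; left
          rw [show N - a + k = N + (b + 1) by omega,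
            cyc_congr i (Nat.add_mod_left N (b + 1)), hme]
        · right; right
          rw [show N - a + k = N + (b + 1 + (k - a - b - 1)) by omega,
            cyc_congr i (Nat.add_mod_left N _), ← cyc_add, hme]
          exact hd1 (k - a - b - 1) (by omega) (by omega)
      rw [this] at hfalse
      simp at hfalse
    have hc : c = b := by
      rw [hcdef]
      apply lrunP_eq hj
      · intro k hk1 hk2
        rw [← hme, cyc_add, show b + 1 + (N - k) = N + (b + 1 - k) by omega,
          cyc_congr i (Nat.add_mod_left N _)]
        exact hb1 (b + 1 - k) (by omega) (by omega)
      · rw [← hme, cyc_add, show b + 1 + (N - (b + 1)) = N by omega, cyc_N]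
        exact hi
    have hL1 : lrunP (Function.update σ i true) j = a + b + 1 := by
      apply lrunP_eq (by rw [hsij]; exact hj)
      · intro k hk1 hk2
        apply upd1_true
        rcases (show k ≤ b ∨ k = b + 1 ∨ (b + 2 ≤ k ∧ k ≤ a + b + 1) by omega)
          with h | h | h
        · right
          rw [← hme, cyc_add, show b + 1 + (N - k) = N + (b + 1 - k) by omega,
            cyc_congr i (Nat.add_mod_left N _)]
          exact hb1 (b + 1 - k) (by omega) (by omega)
        · left
          rw [← hme, cyc_add, show b + 1 + (N - k) = N by omega, cyc_N]
        · right
          rw [← hme, cyc_add, show b + 1 + (N - k) = N - (k - b - 1) by omega]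
          exact ha1 (k - b - 1) (by omega) (by omega)
      · rw [← hme, cyc_add, show b + 1 + (N - (a + b + 1 + 1)) = N - (a + 1) by omega,
          Function.update_of_ne (cyc_ne_self i (by omega) (by omega))]
        exact ha2
    have hR1 : rrunP (Function.update σ i true) j = d := by
      apply rrunP_eq (by rw [hsij]; exact hj)
      · intro k hk1 hk2
        exact upd1_true (Or.inr (hd1 k hk1 hk2))
      · rw [Function.update_of_ne hnm]
        exact hd2
    have hL2 : lrunP (Function.update σ j true) i = a := by
      apply lrunP_eq (by rw [hsji]; exact hi)
      · intro k hk1 hk2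
        exact upd1_true (Or.inr (ha1 k hk1 hk2))
      · rw [Function.update_of_ne]
        · exact ha2
        · intro hcon
          rw [← hme, cyc_eq_cyc_iff, Nat.mod_eq_of_lt (by omega),
            Nat.mod_eq_of_lt (by omega)] at hcon
          omega
    have hR2 : rrunP (Function.update σ j true) i = b + 1 + d := by
      apply rrunP_eq (by rw [hsji]; exact hi)
      · intro k hk1 hk2
        apply upd1_true
        rcases (show k ≤ b ∨ k = b + 1 ∨ (b + 2 ≤ k ∧ k ≤ b + 1 + d) by omega)
          with h | h | h
        · right; exact hb1 k hk1 (by omega)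
        · left; rw [h, hme]
        · right
          rw [show k = b + 1 + (k - b - 1) by omega, ← cyc_add, hme]
          exact hd1 (k - b - 1) (by omega) (by omega)
      · rw [show b + 1 + d + 1 = b + 1 + (d + 1) by omega, ← cyc_add, hme,
          Function.update_of_ne (cyc_ne_self j (by omega) (by omega))]
        exact hd2
    simp only [AmpP, hL1, hR1, hL2, hR2, ← hadef, ← hbdef, ← hcdef, ← hddef, hc]
    have hco := hcompat (a + b + d + 2) (a + 1) (a + b + 2) (by omega) (by omega)
      (by omega) hm
    rw [show a + b + d + 2 - (a + 1) = b + d + 1 by omega,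
      show a + b + 2 - (a + 1) = b + 1 by omega,
      show a + b + 2 - 1 = a + b + 1 by omega] at hco
    have hreal : lam (a + b + 1) (a + 1) * lam (a + b + 1 + d + 1) (a + b + 1 + 1)
        = lam (b + d + 1) (b + 1) * lam (a + (b + 1 + d) + 1) (a + 1) := by
      rw [show a + b + 1 + d + 1 = a + b + d + 2 by omega,
        show a + b + 1 + 1 = a + b + 2 by omega,
        show a + (b + 1 + d) + 1 = a + b + d + 2 by omega]
      linear_combination -hco
    exact_mod_cast congrArg (fun x : ℝ => (x : ℂ)) hreal
  · -- non-merge case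
    have hL1 : lrunP (Function.update σ i true) j = c := by
      apply lrunP_eq (by rw [hsij]; exact hj)
      · intro k hk1 hk2
        exact upd1_true (Or.inr (hc1 k hk1 hk2))
      · rw [Function.update_of_ne]
        · exact hc2
        · intro hcon
          apply hme
          have hbc : b = c := by
            rw [hbdef]
            apply rrunP_eq hi
            · intro k hk1 hk2
              rw [← hcon, cyc_add, show N - (c + 1) + k = N - (c + 1 - k) by omega]
              exact hc1 (c + 1 - k) (by omega) (by omega)
            · rw [← hcon, cyc_add, show N - (c + 1) + (c + 1) = N by omega, cyc_N]
              exact hj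
          rw [hbc, ← hcon, cyc_add, show N - (c + 1) + (c + 1) = N by omega, cyc_N]
    have hR1 : rrunP (Function.update σ i true) j = d := by
      apply rrunP_eq (by rw [hsij]; exact hj)
      · intro k hk1 hk2
        exact upd1_true (Or.inr (hd1 k hk1 hk2))
      · rw [Function.update_of_ne hnm]
        exact hd2
    have hL2 : lrunP (Function.update σ j true) i = a := by
      apply lrunP_eq (by rw [hsji]; exact hi)
      · intro k hk1 hk2
        exact upd1_true (Or.inr (ha1 k hk1 hk2))
      · rw [Function.update_of_ne]
        · exact ha2
        · intro hcon
          apply hnm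
          have hda : d = a := by
            rw [hddef]
            apply rrunP_eq hj
            · intro k hk1 hk2
              rw [← hcon, cyc_add, show N - (a + 1) + k = N - (a + 1 - k) by omega]
              exact ha1 (a + 1 - k) (by omega) (by omega)
            · rw [← hcon, cyc_add, show N - (a + 1) + (a + 1) = N by omega, cyc_N]
              exact hi
          rw [hda, ← hcon, cyc_add, show N - (a + 1) + (a + 1) = N by omega, cyc_N]
    have hR2 : rrunP (Function.update σ j true) i = b := by
      apply rrunP_eq (by rw [hsji]; exact hi)
      · intro k hk1 hk2
        exact upd1_true (Or.inr (hb1 k hk1 hk2))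
      · rw [Function.update_of_ne hme]
        exact hb2
    simp only [AmpP, hL1, hR1, hL2, hR2, ← hadef, ← hbdef, ← hcdef, ← hddef]
    push_cast
    ring

lemma ampP_sym {N ℓ : ℕ} (lam : ℕ → ℕ → ℝ)
    (hcompat : ∀ m n p : ℕ, 1 ≤ n → n < p → p ≤ m → m ≤ ℓ →
      lam m n * lam (m - n) (p - n) = lam m p * lam (p - 1) n)
    (σ : Config N) (i j : Fin N) (hij : i ≠ j)
    (hi : σ i = false) (hj : σ j = false)
    (hOK : PerOK N ℓ (Function.update (Function.update σ i true) j true)) :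
    AmpP lam σ i * AmpP lam (Function.update σ i true) j
      = AmpP lam σ j * AmpP lam (Function.update σ j true) i := by
  by_cases hnm : cyc j (rrunP σ j + 1) = i
  · have hnm2 : cyc i (rrunP σ i + 1) ≠ j := by
      intro hcon
      exact perok_notboth hij hi hj hOK hcon hnm
    refine (ampP_main lam hcompat σ j i (Ne.symm hij) hj hi hnm2 ?_).symm
    rw [Function.update_comm (Ne.symm hij)]
    exact hOK
  · exact ampP_main lam hcompat σ i j hij hi hj hnm hOK

end AmpPer
/-- If the amplitudes `λ_{m,n}` (for `1 ≤ n ≤ m ≤ ℓ`) satisfy the compatibility relations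
`λ_{m,n} λ_{m−n,p−n} = λ_{m,p} λ_{p−1,n}` for all `1 ≤ n < p ≤ m ≤ ℓ`, then for every
chain length `N` the supercharge `Q_λ` of the `M_ℓ` model is nilpotent of order two,
both with periodic boundary conditions and with any special boundary conditions
`s = (c₁, cN)`, `0 ≤ c₁, cN ≤ ℓ`. -/
theorem supercharge_squares_to_zero (ℓ : ℕ) (hℓ : 1 ≤ ℓ) (lam : ℕ → ℕ → ℝ)
    (hcompat : ∀ m n p : ℕ, 1 ≤ n → n < p → p ≤ m → m ≤ ℓ →
      lam m n * lam (m - n) (p - n) = lam m p * lam (p - 1) n)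
    (N : ℕ) :
    (∀ c₁ cN, c₁ ≤ ℓ → cN ≤ ℓ →
      QopA N (OpenOK N ℓ c₁ cN) (fun _ => True) (AmpO lam) ∘ₗ
        QopA N (OpenOK N ℓ c₁ cN) (fun _ => True) (AmpO lam) = 0) ∧
    QopA N (PerOK N ℓ) (fun _ => True) (AmpP lam) ∘ₗ
      QopA N (PerOK N ℓ) (fun _ => True) (AmpP lam) = 0 := by
  constructor
  · intro c₁ cN hc1 hcN
    apply Qsq_zero
    · exact fun σ i hi h => OpenOK_down N ℓ c₁ cN σ i hi h
    · intro σ i j hij hi hj hOK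
      exact ampO_sym lam hcompat σ i j hij hi hj hOK
  · apply Qsq_zero
    · exact fun σ i hi h => PerOK_down N ℓ σ i hi h
    · intro σ i j hij hi hj hOK
      exact ampP_sym lam hcompat σ i j hij hi hj hOK

end
end

section
/- Let ℓ ≥ 1. For the M_ℓ model on the closed chain of N sites with periodic boundary conditions: if 1 ≤ N ≤ ℓ+1, then dim H_Q^f = 1 for f = N−1 and 0 for every other f; if N = ℓ+2, then dim H_Q^f = ℓ+1 for f = ℓ and 0 for every other f. -/
attribute [local instance 10] Classical.propDecidable

noncomputable section

/-- The cocycles at gradeV `f`: `ker Q ∩ V_{N,f}` (for the supercharge restricted to `S`). -/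
def cocycles (N : ℕ) (OK : Config N → Prop) (S : Fin N → Prop) (f : ℕ) :
    Submodule ℂ (AState N OK) :=
  LinearMap.ker (Qop N OK S) ⊓ gradeV N OK f

/-- The coboundaries at gradeV `f`: `Q (V_{N,f-1})` (for the supercharge restricted to `S`). -/
def cobounds (N : ℕ) (OK : Config N → Prop) (S : Fin N → Prop) (f : ℕ) :
    Submodule ℂ (AState N OK) :=
  (gradeV N OK (f - 1)).map (Qop N OK S)

/-- The cohomology `H_Q^f = ker (Q : V_{N,f} → V_{N,f+1}) / Q (V_{N,f-1})`. -/
abbrev CohSpace (N : ℕ) (OK : Config N → Prop) (S : Fin N → Prop) (f : ℕ) :=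
  cocycles N OK S f ⧸ ((cobounds N OK S f).comap (cocycles N OK S f).subtype)

/-- The dimension of `H_Q^f`. -/
def cohDim (N : ℕ) (OK : Config N → Prop) (S : Fin N → Prop) (f : ℕ) : ℕ :=
  Module.finrank ℂ (CohSpace N OK S f)

/-- The cohomology class represented by a cocycle. -/
def cohClass (N : ℕ) (OK : Config N → Prop) (S : Fin N → Prop) (f : ℕ)
    (ψ : AState N OK) (h : ψ ∈ cocycles N OK S f) : CohSpace N OK S f :=
  Submodule.Quotient.mk ⟨ψ, h⟩


namespace Aux
variable {N : ℕ}

lemma filter_update_true (σ : Config N) (i : Fin N) (h : σ i = false) :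
    (Finset.univ.filter fun j => Function.update σ i true j = true)
      = insert i (Finset.univ.filter fun j => σ j = true) := by
  ext j
  simp only [Finset.mem_filter, Finset.mem_univ, true_and, Finset.mem_insert,
    Function.update_apply]
  by_cases hj : j = i <;> simp [hj, h]

lemma fermions_update_true {σ : Config N} {i : Fin N} (h : σ i = false) :
    fermions (Function.update σ i true) = fermions σ + 1 := by
  unfold fermions
  rw [filter_update_true σ i h, Finset.card_insert_of_notMem (by simp [h])]

lemma fermions_update_false {σ : Config N} {i : Fin N} (h : σ i = true) :
    fermions (Function.update σ i false) + 1 = fermions σ := by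
  have h2 : Function.update σ i false i = false := by simp
  have := fermions_update_true (σ := Function.update σ i false) (i := i) h2
  rw [Function.update_idem, ← h, Function.update_eq_self] at this
  exact this.symm

lemma sgn_update_true (σ : Config N) {i j : Fin N} (h : σ i = false) (hij : i ≠ j) :
    sgn (Function.update σ i true) j = (if i < j then -1 else 1) * sgn σ j := by
  unfold sgn
  by_cases hlt : i < j
  · have he : (Finset.univ.filter fun k => k < j ∧ Function.update σ i true k = true)
        = insert i (Finset.univ.filter fun k => k < j ∧ σ k = true) := by
      ext k
      simp only [Finset.mem_filter, Finset.mem_univ, true_and, Finset.mem_insert,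
        Function.update_apply]
      by_cases hk : k = i <;> simp [hk, h, hlt]
    rw [he, Finset.card_insert_of_notMem (by simp [h]), pow_succ, if_pos hlt]
    ring
  · have he : (Finset.univ.filter fun k => k < j ∧ Function.update σ i true k = true)
        = Finset.univ.filter fun k => k < j ∧ σ k = true := by
      ext k
      simp only [Finset.mem_filter, Finset.mem_univ, true_and, Function.update_apply]
      by_cases hk : k = i
      · subst hk; simp [hlt]
      · simp [hk]
    rw [he, if_neg hlt, one_mul]

def toFinsetEquiv : Config N ≃ Finset (Fin N) where
  toFun σ := Finset.univ.filter fun i => σ i = true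
  invFun s := fun i => if i ∈ s then true else false
  left_inv σ := by
    funext i; by_cases h : σ i = true <;> simp [h]
  right_inv s := by
    ext i; simp

lemma card_config_fermions_eq (f : ℕ) :
    Fintype.card {σ : Config N // fermions σ = f} = N.choose f := by
  have e : {σ : Config N // fermions σ = f} ≃ {s : Finset (Fin N) // s.card = f} :=
    Equiv.subtypeEquiv toFinsetEquiv (by intro σ; exact Iff.rfl)
  rw [Fintype.card_congr e, Fintype.card_finset_len]
  simp

/-- extension of a state by zero to all configurations -/
def ext0 {OK : Config N → Prop} (ψ : AState N OK) : Config N → ℂ :=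
  fun σ => if h : OK σ then ψ ⟨σ, h⟩ else 0

lemma ext0_coe {OK : Config N → Prop} (ψ : AState N OK) (σ : {σ : Config N // OK σ}) :
    ext0 ψ σ.1 = ψ σ := by
  rw [ext0, dif_pos σ.2]

lemma mem_gradeV' {OK : Config N → Prop} {f : ℕ} {ψ : AState N OK} :
    ψ ∈ gradeV N OK f ↔ ∀ σ : {σ : Config N // OK σ}, fermions σ.1 ≠ f → ψ σ = 0 :=
  Iff.rfl

lemma mem_gradeV {OK : Config N → Prop} {f : ℕ} {ψ : AState N OK} :
    ψ ∈ gradeV N OK f ↔ ∀ σ : Config N, fermions σ ≠ f → ext0 ψ σ = 0 := by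
  rw [mem_gradeV']
  constructor
  · intro hψ σ hσ
    unfold ext0
    split
    · exact hψ _ hσ
    · rfl
  · intro hψ σ hσ
    have := hψ σ.1 hσ
    rwa [ext0_coe] at this

lemma Qop_apply {OK : Config N → Prop} (ψ : AState N OK) (τ : {σ : Config N // OK σ}) :
    Qop N OK (fun _ => True) ψ τ
      = ∑ i : Fin N, if τ.1 i = true
          then sgn (Function.update τ.1 i false) i * ext0 ψ (Function.update τ.1 i false)
          else 0 := by
  have step1 : Qop N OK (fun _ => True) ψ τ
      = ∑ σ : {σ : Config N // OK σ}, ∑ i : Fin N,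
          (if σ.1 i = false ∧ τ.1 = Function.update σ.1 i true
            then sgn σ.1 i * ψ σ else 0) := by
    show (QmatA N OK (fun _ => True) fun _ _ => 1).mulVec ψ τ = _
    simp only [Matrix.mulVec, dotProduct, QmatA, true_and, one_mul,
      Finset.sum_mul, ite_mul, zero_mul]
  rw [step1, Finset.sum_comm]
  apply Finset.sum_congr rfl
  intro i _
  by_cases hτ : τ.1 i = true
  · rw [if_pos hτ]
    by_cases hOK : OK (Function.update τ.1 i false)
    · refine (Finset.sum_eq_single_of_mem
        (⟨Function.update τ.1 i false, hOK⟩ : {σ : Config N // OK σ})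
        (Finset.mem_univ _) ?_).trans ?_
      · intro σ _ hne
        rw [if_neg]
        rintro ⟨h1, h2⟩
        apply hne; apply Subtype.ext
        show σ.1 = Function.update τ.1 i false
        rw [h2, Function.update_idem, ← h1, Function.update_eq_self]
      · have hfix : τ.1 = Function.update (Function.update τ.1 i false) i true := by
          rw [Function.update_idem, ← hτ]
          exact (Function.update_eq_self i τ.1).symm
        rw [if_pos ⟨Function.update_self i false τ.1, hfix⟩]
        simp only [ext0]
        rw [dif_pos hOK]
    · simp only [ext0]
      rw [dif_neg hOK, mul_zero]
      apply Finset.sum_eq_zero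
      intro σ _
      rw [if_neg]
      rintro ⟨h1, h2⟩
      apply hOK
      have hσ : σ.1 = Function.update τ.1 i false := by
        rw [h2, Function.update_idem, ← h1, Function.update_eq_self]
      rw [← hσ]; exact σ.2
  · rw [if_neg hτ]
    apply Finset.sum_eq_zero
    intro σ _
    rw [if_neg]
    rintro ⟨h1, h2⟩
    apply hτ
    rw [h2, Function.update_self]

/-- the contraction homotopy at site `0` -/
def hopMat (N : ℕ) (hN : 0 < N) (OK : Config N → Prop) :
    Matrix {σ : Config N // OK σ} {σ : Config N // OK σ} ℂ := fun σ τ =>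
  if σ.1 ⟨0, hN⟩ = false ∧ τ.1 = Function.update σ.1 ⟨0, hN⟩ true then 1 else 0

def hop (N : ℕ) (hN : 0 < N) (OK : Config N → Prop) : AState N OK →ₗ[ℂ] AState N OK :=
  (hopMat N hN OK).mulVecLin

lemma hop_apply {hN : 0 < N} {OK : Config N → Prop} (ψ : AState N OK)
    (σ : {σ : Config N // OK σ}) :
    hop N hN OK ψ σ = if σ.1 ⟨0, hN⟩ = false
      then ext0 ψ (Function.update σ.1 ⟨0, hN⟩ true) else 0 := by
  have step1 : hop N hN OK ψ σ
      = ∑ τ : {σ : Config N // OK σ},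
          (if σ.1 ⟨0, hN⟩ = false ∧ τ.1 = Function.update σ.1 ⟨0, hN⟩ true then ψ τ else 0) := by
    show (hopMat N hN OK).mulVec ψ σ = _
    simp only [Matrix.mulVec, dotProduct, hopMat, ite_mul, one_mul, zero_mul]
  rw [step1]
  by_cases hz : σ.1 ⟨0, hN⟩ = false
  · rw [if_pos hz]
    by_cases hOK : OK (Function.update σ.1 ⟨0, hN⟩ true)
    · refine (Finset.sum_eq_single_of_mem
        (⟨Function.update σ.1 ⟨0, hN⟩ true, hOK⟩ : {σ : Config N // OK σ})
        (Finset.mem_univ _) ?_).trans ?_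
      · intro τ _ hne
        rw [if_neg]
        rintro ⟨-, h2⟩
        exact hne (Subtype.ext h2)
      · rw [if_pos ⟨hz, rfl⟩]
        simp only [ext0]
        rw [dif_pos hOK]
    · simp only [ext0]
      rw [dif_neg hOK]
      apply Finset.sum_eq_zero
      intro τ _
      rw [if_neg]
      rintro ⟨-, h2⟩
      exact hOK (h2 ▸ τ.2)
  · rw [if_neg hz]
    apply Finset.sum_eq_zero
    intro τ _
    rw [if_neg]
    rintro ⟨h1, -⟩
    exact hz h1

lemma Qop_grade {OK : Config N → Prop} {f : ℕ} {ψ : AState N OK}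
    (hψ : ψ ∈ gradeV N OK f) :
    Qop N OK (fun _ => True) ψ ∈ gradeV N OK (f + 1) := by
  rw [mem_gradeV']
  intro τ hτ
  rw [Qop_apply]
  apply Finset.sum_eq_zero
  intro i _
  split
  next h =>
    have hf := fermions_update_false (σ := τ.1) (i := i) h
    have hne : fermions (Function.update τ.1 i false) ≠ f := by omega
    rw [mem_gradeV.mp hψ _ hne, mul_zero]
  next => rfl

lemma hop_grade {hN : 0 < N} {OK : Config N → Prop} {f : ℕ} {ψ : AState N OK}
    (hψ : ψ ∈ gradeV N OK (f + 1)) : hop N hN OK ψ ∈ gradeV N OK f := by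
  rw [mem_gradeV']
  intro σ hσ
  rw [hop_apply]
  split
  next h =>
    apply mem_gradeV.mp hψ
    rw [fermions_update_true h]
    omega
  next => rfl

lemma hop_grade_zero {hN : 0 < N} {OK : Config N → Prop} {ψ : AState N OK}
    (hψ : ψ ∈ gradeV N OK 0) : hop N hN OK ψ = 0 := by
  funext σ
  rw [hop_apply]
  show _ = (0 : ℂ)
  split
  next h =>
    apply mem_gradeV.mp hψ
    rw [fermions_update_true h]
    omega
  next => rfl


lemma sgn_zeroFin (hN : 0 < N) (σ : Config N) : sgn σ ⟨0, hN⟩ = 1 := by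
  unfold sgn
  have he : (Finset.univ.filter fun j => j < (⟨0, hN⟩ : Fin N) ∧ σ j = true) = ∅ := by
    ext j; simp [Fin.lt_def]
  rw [he]; simp

lemma z_lt_of_ne {hN : 0 < N} {i : Fin N} (h : i ≠ ⟨0, hN⟩) : (⟨0, hN⟩ : Fin N) < i := by
  rcases Nat.eq_zero_or_pos i.1 with h0 | h0
  · exact absurd (Fin.ext h0) h
  · rw [Fin.lt_def]; exact h0

lemma ext0_nonOK {OK : Config N → Prop} (ψ : AState N OK) {ρ : Config N} (h : ¬ OK ρ) :
    ext0 ψ ρ = 0 := dif_neg h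

/-- The antisymmetry of the double sum occurring in `Q ∘ Q`. -/
lemma Fanti (τ : Config N) (g : Config N → ℂ) (i j : Fin N) :
    (if τ i = true ∧ Function.update τ i false j = true
      then sgn (Function.update τ i false) i *
        (sgn (Function.update (Function.update τ i false) j false) j *
          g (Function.update (Function.update τ i false) j false))
      else 0)
    = -(if τ j = true ∧ Function.update τ j false i = true
      then sgn (Function.update τ j false) j *
        (sgn (Function.update (Function.update τ j false) i false) i *
          g (Function.update (Function.update τ j false) i false))
      else 0) := by
  by_cases hij : i = j
  · subst hij
    rw [if_neg, neg_zero]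
    · rintro ⟨-, h2⟩
      rw [Function.update_self] at h2
      exact Bool.false_ne_true h2
  · by_cases hi : τ i = true
    · by_cases hj : τ j = true
      · set ρ := Function.update (Function.update τ i false) j false with hρ
        have hρji : Function.update (Function.update τ j false) i false = ρ := by
          rw [hρ]
          exact Function.update_comm (Ne.symm hij) false false τ
        have hρj : ρ j = false := by rw [hρ]; simp
        have hρi : ρ i = false := by
          rw [hρ, Function.update_of_ne hij, Function.update_self]
        have e1 : Function.update τ i false = Function.update ρ j true := by
          rw [hρ, Function.update_idem]
          have hX : Function.update τ i false j = true := by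
            rw [Function.update_of_ne (Ne.symm hij)]; exact hj
          rw [← hX, Function.update_eq_self]
        have e2 : Function.update τ j false = Function.update ρ i true := by
          rw [← hρji, Function.update_idem]
          have hX : Function.update τ j false i = true := by
            rw [Function.update_of_ne hij]; exact hi
          rw [← hX, Function.update_eq_self]
        have c1 : τ i = true ∧ Function.update τ i false j = true :=
          ⟨hi, by rw [Function.update_of_ne (Ne.symm hij)]; exact hj⟩
        have c2 : τ j = true ∧ Function.update τ j false i = true :=
          ⟨hj, by rw [Function.update_of_ne hij]; exact hi⟩
        rw [if_pos c1, if_pos c2, hρji, e1, e2,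
          sgn_update_true ρ hρj (Ne.symm hij), sgn_update_true ρ hρi hij]
        rcases lt_or_gt_of_ne hij with h | h
        · rw [if_pos h, if_neg (asymm h)]; ring
        · rw [if_neg (asymm h), if_pos h]; ring
      · rw [if_neg, if_neg, neg_zero]
        · rintro ⟨h1, -⟩; exact hj h1
        · rintro ⟨-, h2⟩
          rw [Function.update_of_ne (Ne.symm hij)] at h2
          exact hj h2
    · rw [if_neg, if_neg, neg_zero]
      · rintro ⟨-, h2⟩
        rw [Function.update_of_ne hij] at h2
        exact hi h2
      · rintro ⟨h1, -⟩; exact hi h1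

/-- threshold predicate -/
def OKP (N m : ℕ) : Config N → Prop := fun σ => fermions σ ≤ m

lemma ext0_Qop {m : ℕ} {ψ : AState N (OKP N m)} {ρ : Config N} (hρ : fermions ρ ≤ m) :
    ext0 (Qop N (OKP N m) (fun _ => True) ψ) ρ
      = ∑ i : Fin N, if ρ i = true
          then sgn (Function.update ρ i false) i * ext0 ψ (Function.update ρ i false)
          else 0 := by
  have hOK : OKP N m ρ := hρ
  simp only [ext0]
  rw [dif_pos hOK]
  exact Qop_apply ψ ⟨ρ, hOK⟩

lemma ext0_hop {m : ℕ} (hN : 0 < N) {ψ : AState N (OKP N m)} {ρ : Config N}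
    (hρ : fermions ρ ≤ m) :
    ext0 (hop N hN (OKP N m) ψ) ρ
      = if ρ ⟨0, hN⟩ = false then ext0 ψ (Function.update ρ ⟨0, hN⟩ true) else 0 := by
  have hOK : OKP N m ρ := hρ
  simp only [ext0]
  rw [dif_pos hOK]
  exact hop_apply ψ ⟨ρ, hOK⟩

lemma fermions_update_false_le {m : ℕ} {σ : Config N} {i : Fin N}
    (hσ : fermions σ ≤ m) : fermions (Function.update σ i false) ≤ m := by
  by_cases h : σ i = true
  · have := fermions_update_false (σ := σ) (i := i) h
    omega
  · have : σ i = false := by simpa using h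
    rw [← this, Function.update_eq_self]
    exact hσ

lemma Qsq {m : ℕ} (ψ : AState N (OKP N m)) :
    Qop N (OKP N m) (fun _ => True) (Qop N (OKP N m) (fun _ => True) ψ) = 0 := by
  funext τ
  show _ = (0 : ℂ)
  rw [Qop_apply]
  have hterm : ∀ i : Fin N,
      (if τ.1 i = true
        then sgn (Function.update τ.1 i false) i *
          ext0 (Qop N (OKP N m) (fun _ => True) ψ) (Function.update τ.1 i false)
        else 0)
      = ∑ j : Fin N,
          (if τ.1 i = true ∧ Function.update τ.1 i false j = true
            then sgn (Function.update τ.1 i false) i *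
              (sgn (Function.update (Function.update τ.1 i false) j false) j *
                ext0 ψ (Function.update (Function.update τ.1 i false) j false))
            else 0) := by
    intro i
    by_cases hi : τ.1 i = true
    · rw [if_pos hi, ext0_Qop (fermions_update_false_le τ.2), Finset.mul_sum]
      apply Finset.sum_congr rfl
      intro j _
      by_cases hj : Function.update τ.1 i false j = true
      · rw [if_pos hj, if_pos ⟨hi, hj⟩]
      · rw [if_neg hj, mul_zero, if_neg (by rintro ⟨-, h⟩; exact hj h)]
    · rw [if_neg hi]
      symm
      apply Finset.sum_eq_zero
      intro j _
      rw [if_neg (by rintro ⟨h, -⟩; exact hi h)]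
  rw [Finset.sum_congr rfl fun i _ => hterm i]
  set S := ∑ i : Fin N, ∑ j : Fin N,
      (if τ.1 i = true ∧ Function.update τ.1 i false j = true
        then sgn (Function.update τ.1 i false) i *
          (sgn (Function.update (Function.update τ.1 i false) j false) j *
            ext0 ψ (Function.update (Function.update τ.1 i false) j false))
        else 0) with hS
  have hanti : S = -S := by
    conv_lhs => rw [hS, Finset.sum_comm]
    have : ∀ j : Fin N, ∀ i : Fin N,
        (if τ.1 i = true ∧ Function.update τ.1 i false j = true
          then sgn (Function.update τ.1 i false) i *
            (sgn (Function.update (Function.update τ.1 i false) j false) j *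
              ext0 ψ (Function.update (Function.update τ.1 i false) j false))
          else 0)
        = -(if τ.1 j = true ∧ Function.update τ.1 j false i = true
          then sgn (Function.update τ.1 j false) j *
            (sgn (Function.update (Function.update τ.1 j false) i false) i *
              ext0 ψ (Function.update (Function.update τ.1 j false) i false))
          else 0) := fun j i => Fanti τ.1 (ext0 ψ) i j
    calc (∑ j : Fin N, ∑ i : Fin N, _) = _ := Finset.sum_congr rfl fun j _ =>
          Finset.sum_congr rfl fun i _ => this j i
    _ = -S := by rw [hS]; simp [Finset.sum_neg_distrib]
  linear_combination hanti / 2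

lemma homotopy {m : ℕ} (hN : 0 < N) {f : ℕ} (hfm : f + 1 ≤ m) {ψ : AState N (OKP N m)}
    (hψ : ψ ∈ gradeV N (OKP N m) f) :
    Qop N (OKP N m) (fun _ => True) (hop N hN (OKP N m) ψ)
      + hop N hN (OKP N m) (Qop N (OKP N m) (fun _ => True) ψ) = ψ := by
  funext σ
  rw [Pi.add_apply]
  by_cases hz : σ.1 ⟨0, hN⟩ = true
  · rw [hop_apply, if_neg (by simp [hz]), add_zero, Qop_apply]
    refine (Finset.sum_eq_single_of_mem ⟨0, hN⟩ (Finset.mem_univ _) ?_).trans ?_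
    · intro i _ hiz
      by_cases hi : σ.1 i = true
      · rw [if_pos hi, ext0_hop hN (fermions_update_false_le σ.2),
          if_neg (by rw [Function.update_of_ne (Ne.symm hiz)]; simp [hz]), mul_zero]
      · rw [if_neg hi]
    · rw [if_pos hz, ext0_hop hN (fermions_update_false_le σ.2),
        if_pos (Function.update_self ⟨0, hN⟩ false σ.1), Function.update_idem, ← hz,
        Function.update_eq_self, sgn_zeroFin hN, one_mul, ext0_coe]
  · have hz' : σ.1 ⟨0, hN⟩ = false := by simpa using hz
    rw [hop_apply, if_pos hz', Qop_apply]
    by_cases hm : fermions σ.1 < m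
    · have hσz : fermions (Function.update σ.1 ⟨0, hN⟩ true) ≤ m := by
        rw [fermions_update_true hz']
        omega
      rw [ext0_Qop hσz, ← Finset.sum_add_distrib]
      refine (Finset.sum_eq_single_of_mem ⟨0, hN⟩ (Finset.mem_univ _) ?_).trans ?_
      · intro i _ hiz
        by_cases hi : σ.1 i = true
        · have hupz : Function.update σ.1 i false ⟨0, hN⟩ = false := by
            rw [Function.update_of_ne (Ne.symm hiz)]; exact hz'
          have hupi : Function.update σ.1 ⟨0, hN⟩ true i = true := by
            rw [Function.update_of_ne hiz]; exact hi
          rw [if_pos hi, ext0_hop hN (fermions_update_false_le σ.2), if_pos hupz,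
            if_pos hupi]
          have hcomm : Function.update (Function.update σ.1 ⟨0, hN⟩ true) i false
              = Function.update (Function.update σ.1 i false) ⟨0, hN⟩ true :=
            Function.update_comm (Ne.symm hiz) true false σ.1
          rw [hcomm, sgn_update_true (Function.update σ.1 i false) hupz (Ne.symm hiz),
            if_pos (z_lt_of_ne hiz)]
          ring
        · have hi' : σ.1 i = false := by simpa using hi
          rw [if_neg hi, if_neg (by rw [Function.update_of_ne hiz, hi']; simp), add_zero]
      · have h1 : Function.update σ.1 ⟨0, hN⟩ true ⟨0, hN⟩ = true := Function.update_self ⟨0, hN⟩ true σ.1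
        rw [if_neg (by simp [hz']), zero_add, if_pos h1, Function.update_idem, ← hz',
          Function.update_eq_self, sgn_zeroFin hN, one_mul, ext0_coe]
    · have hmm : fermions σ.1 = m := le_antisymm σ.2 (by omega)
      have hB : ext0 (Qop N (OKP N m) (fun _ => True) ψ) (Function.update σ.1 ⟨0, hN⟩ true) = 0 := by
        apply ext0_nonOK
        show ¬ fermions _ ≤ m
        rw [fermions_update_true hz']
        omega
      rw [hB, add_zero]
      have hψσ : ψ σ = 0 := mem_gradeV'.mp hψ σ (by omega)
      rw [hψσ]
      apply Finset.sum_eq_zero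
      intro i _
      by_cases hi : σ.1 i = true
      · have hupz : Function.update σ.1 i false ⟨0, hN⟩ = false := by
          by_cases hiz : i = ⟨0, hN⟩
          · rw [hiz, Function.update_self]
          · rw [Function.update_of_ne (Ne.symm hiz)]; exact hz'
        rw [if_pos hi, ext0_hop hN (fermions_update_false_le σ.2), if_pos hupz]
        have hferm : fermions (Function.update (Function.update σ.1 i false) ⟨0, hN⟩ true) = m := by
          rw [fermions_update_true hupz]
          have := fermions_update_false (σ := σ.1) (i := i) hi
          omega
        rw [mem_gradeV.mp hψ _ (by omega), mul_zero]
      · rw [if_neg hi]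


/-! ### Dimension bookkeeping -/

def gradeLinEquiv (OK : Config N → Prop) (f : ℕ) :
    gradeV N OK f ≃ₗ[ℂ] ({p : {σ : Config N // OK σ} // fermions p.1 = f} → ℂ) where
  toFun ψ p := ψ.1 p.1
  map_add' _ _ := rfl
  map_smul' _ _ := rfl
  invFun g := ⟨fun σ => if h : fermions σ.1 = f then g ⟨σ, h⟩ else 0, by
    intro σ hσ; exact dif_neg hσ⟩
  left_inv ψ := by
    apply Subtype.ext
    funext σ
    show (dite (fermions σ.1 = f) (fun h => ψ.1 σ) fun _ => 0) = ψ.1 σ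
    by_cases h : fermions σ.1 = f
    · exact dif_pos h
    · rw [dif_neg h]
      exact (ψ.2 σ h).symm
  right_inv g := by
    funext p
    show (if h : fermions p.1.1 = f then g ⟨p.1, h⟩ else 0) = g p
    rw [dif_pos p.2]

lemma finrank_gradeV (OK : Config N → Prop) (f : ℕ) :
    Module.finrank ℂ (gradeV N OK f)
      = Fintype.card {p : {σ : Config N // OK σ} // fermions p.1 = f} := by
  rw [(gradeLinEquiv OK f).finrank_eq, Module.finrank_fintype_fun_eq_card]

lemma finrank_gradeV_OKP (m f : ℕ) :
    Module.finrank ℂ (gradeV N (OKP N m) f)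
      = if f ≤ m then N.choose f else 0 := by
  rw [finrank_gradeV]
  refine Eq.trans (Fintype.card_congr
    (Equiv.subtypeSubtypeEquivSubtypeInter (OKP N m) (fun σ => fermions σ = f))) ?_
  by_cases hf : f ≤ m
  · rw [if_pos hf, ← card_config_fermions_eq (N := N) f]
    apply Fintype.card_congr
    apply Equiv.subtypeEquivRight
    intro σ
    constructor
    · rintro ⟨-, h⟩; exact h
    · intro h
      exact ⟨show fermions σ ≤ m by omega, h⟩
  · rw [if_neg hf]
    rw [Fintype.card_eq_zero_iff]
    constructor
    rintro ⟨σ, hσ1, hσ2⟩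
    exact hf (hσ2 ▸ hσ1)

lemma gradeV_bot {m f : ℕ} (hf : m < f) : gradeV N (OKP N m) f = ⊥ := by
  apply le_antisymm _ bot_le
  intro ψ hψ
  rw [Submodule.mem_bot]
  funext σ
  show ψ σ = 0
  exact mem_gradeV'.mp hψ σ (by have : fermions σ.1 ≤ m := σ.2; omega)

lemma finrank_map_add_inf {V : Type*} [AddCommGroup V] [Module ℂ V] [FiniteDimensional ℂ V]
    (Q : V →ₗ[ℂ] V) (p : Submodule ℂ V) :
    Module.finrank ℂ (p.map Q) + Module.finrank ℂ ↥(LinearMap.ker Q ⊓ p)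
      = Module.finrank ℂ p := by
  have h := LinearMap.finrank_range_add_finrank_ker (Q.domRestrict p)
  rw [LinearMap.range_domRestrict] at h
  have e : ↥(LinearMap.ker (Q.domRestrict p)) ≃ₗ[ℂ] ↥(LinearMap.ker Q ⊓ p) := by
    rw [LinearMap.ker_domRestrict]
    have hc : Submodule.comap p.subtype (LinearMap.ker Q)
        = Submodule.comap p.subtype (LinearMap.ker Q ⊓ p) := by
      rw [Submodule.comap_inf, Submodule.comap_subtype_self, inf_top_eq]
    rw [hc]
    exact Submodule.comapSubtypeEquivOfLe inf_le_right
  rw [e.finrank_eq] at h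
  exact h

set_option synthInstance.maxHeartbeats 1000000 in
set_option maxHeartbeats 1000000 in
lemma cohDim_add {OK : Config N → Prop} {S : Fin N → Prop} {f : ℕ}
    (h : cobounds N OK S f ≤ cocycles N OK S f) :
    cohDim N OK S f + Module.finrank ℂ (cobounds N OK S f)
      = Module.finrank ℂ (cocycles N OK S f) := by
  haveI hfd : FiniteDimensional ℂ (AState N OK) := by infer_instance
  have hq := Submodule.finrank_quotient_add_finrank (R := ℂ)
    (M := ↥(cocycles N OK S f))
    ((cobounds N OK S f).comap (cocycles N OK S f).subtype)
  have he : Module.finrank ℂ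
        ↥((cobounds N OK S f).comap (cocycles N OK S f).subtype)
      = Module.finrank ℂ ↥(cobounds N OK S f) :=
    LinearEquiv.finrank_eq (Submodule.comapSubtypeEquivOfLe h)
  rw [he] at hq
  unfold cohDim
  exact hq

lemma cohDim_zero_of_le {OK : Config N → Prop} {S : Fin N → Prop} {f : ℕ}
    (h : cocycles N OK S f ≤ cobounds N OK S f) :
    cohDim N OK S f = 0 := by
  have htop : (cobounds N OK S f).comap (cocycles N OK S f).subtype = ⊤ :=
    Submodule.comap_subtype_eq_top.mpr h
  have : Subsingleton (CohSpace N OK S f) :=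
    Submodule.Quotient.subsingleton_iff.mpr htop
  unfold cohDim
  exact Module.finrank_zero_of_subsingleton

section MDim

variable {m : ℕ} (hN : 0 < N)
include hN

lemma CY_le_CB {f : ℕ} (hfm : f + 1 ≤ m) :
    cocycles N (OKP N m) (fun _ => True) f ≤ cobounds N (OKP N m) (fun _ => True) f := by
  intro ψ hψ
  obtain ⟨hker, hgrade⟩ := Submodule.mem_inf.mp hψ
  have hker' : Qop N (OKP N m) (fun _ => True) ψ = 0 := LinearMap.mem_ker.mp hker
  have hh := homotopy hN hfm hgrade
  rw [hker', map_zero, add_zero] at hh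
  cases f with
  | zero =>
    have h0 : hop N hN (OKP N m) ψ = 0 := hop_grade_zero hgrade
    rw [h0, map_zero] at hh
    rw [← hh]
    exact Submodule.zero_mem _
  | succ g =>
    refine ⟨hop N hN (OKP N m) ψ, ?_, hh⟩
    show hop N hN (OKP N m) ψ ∈ gradeV N (OKP N m) (g + 1 - 1)
    exact hop_grade hgrade

omit hN in
lemma CB_le_CY {g : ℕ} :
    cobounds N (OKP N m) (fun _ => True) (g + 1)
      ≤ cocycles N (OKP N m) (fun _ => True) (g + 1) := by
  rintro ψ ⟨φ, hφ, rfl⟩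
  apply Submodule.mem_inf.mpr
  constructor
  · exact LinearMap.mem_ker.mpr (Qsq φ)
  · exact Qop_grade hφ

omit hN in
lemma CY_top :
    cocycles N (OKP N m) (fun _ => True) m = gradeV N (OKP N m) m := by
  apply le_antisymm inf_le_right
  intro ψ hψ
  apply Submodule.mem_inf.mpr
  refine ⟨LinearMap.mem_ker.mpr ?_, hψ⟩
  have := Qop_grade (OK := OKP N m) hψ
  rw [gradeV_bot (lt_add_one m)] at this
  exact (Submodule.mem_bot ℂ).mp this

lemma CY_rank : ∀ f, f < m →
    Module.finrank ℂ (cocycles N (OKP N m) (fun _ => True) f) + (N - 1).choose f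
      = N.choose f := by
  intro f
  induction f with
  | zero =>
    intro hm
    have hbot : cocycles N (OKP N m) (fun _ => True) 0 = ⊥ := by
      apply le_antisymm _ bot_le
      intro ψ hψ
      obtain ⟨hker, hgrade⟩ := Submodule.mem_inf.mp hψ
      have hh := homotopy hN (by omega : 0 + 1 ≤ m) hgrade
      rw [LinearMap.mem_ker.mp hker, map_zero, add_zero,
        hop_grade_zero hgrade, map_zero] at hh
      rw [Submodule.mem_bot]
      exact hh.symm
    rw [hbot, finrank_bot]
    simp
  | succ g ih =>
    intro hm
    have heq : cocycles N (OKP N m) (fun _ => True) (g + 1)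
        = cobounds N (OKP N m) (fun _ => True) (g + 1) :=
      le_antisymm (CY_le_CB hN (by omega)) CB_le_CY
    have hmap := finrank_map_add_inf (Qop N (OKP N m) (fun _ => True))
      (gradeV N (OKP N m) g)
    have hker : LinearMap.ker (Qop N (OKP N m) (fun _ => True)) ⊓ gradeV N (OKP N m) g
        = cocycles N (OKP N m) (fun _ => True) g := rfl
    rw [hker] at hmap
    have hg : Module.finrank ℂ (gradeV N (OKP N m) g) = N.choose g := by
      rw [finrank_gradeV_OKP, if_pos (by omega : g ≤ m)]
    have hCB : cobounds N (OKP N m) (fun _ => True) (g + 1)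
        = (gradeV N (OKP N m) g).map (Qop N (OKP N m) (fun _ => True)) := rfl
    have hih := ih (by omega)
    have hpascal : N.choose (g + 1) = (N - 1).choose g + (N - 1).choose (g + 1) := by
      obtain ⟨n, rfl⟩ : ∃ n, N = n + 1 := ⟨N - 1, by omega⟩
      simpa using Nat.choose_succ_succ' n g
    rw [heq, hCB]
    omega

lemma mainCoh (f : ℕ) :
    cohDim N (OKP N m) (fun _ => True) f = if f = m then (N - 1).choose m else 0 := by
  by_cases hf : f = m
  · subst hf
    rw [if_pos rfl]
    cases' Nat.eq_zero_or_pos f with h0 hpos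
    · subst h0
      have hCB : cobounds N (OKP N 0) (fun _ => True) 0 = ⊥ := by
        apply le_antisymm _ bot_le
        rintro ψ ⟨φ, hφ, rfl⟩
        have := Qop_grade (OK := OKP N 0) hφ
        rw [show (0 : ℕ) - 1 + 1 = 1 from rfl, gradeV_bot (by omega)] at this
        exact this
      have hca := cohDim_add (f := 0) (hCB ▸ bot_le)
      rw [hCB, finrank_bot, add_zero, CY_top, finrank_gradeV_OKP, if_pos le_rfl] at hca
      simpa using hca
    · obtain ⟨g, rfl⟩ : ∃ g, f = g + 1 := ⟨f - 1, by omega⟩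
      have hca := cohDim_add (CB_le_CY (N := N) (m := g + 1) (g := g))
      rw [CY_top, finrank_gradeV_OKP, if_pos le_rfl] at hca
      have hmap := finrank_map_add_inf (Qop N (OKP N (g + 1)) (fun _ => True))
        (gradeV N (OKP N (g + 1)) g)
      have hker : LinearMap.ker (Qop N (OKP N (g + 1)) (fun _ => True))
            ⊓ gradeV N (OKP N (g + 1)) g
          = cocycles N (OKP N (g + 1)) (fun _ => True) g := rfl
      rw [hker] at hmap
      have hg : Module.finrank ℂ (gradeV N (OKP N (g + 1)) g) = N.choose g := by
        rw [finrank_gradeV_OKP, if_pos (by omega : g ≤ g + 1)]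
      have hih := CY_rank (m := g + 1) hN g (by omega)
      have hCB : cobounds N (OKP N (g + 1)) (fun _ => True) (g + 1)
          = (gradeV N (OKP N (g + 1)) g).map (Qop N (OKP N (g + 1)) (fun _ => True)) := rfl
      rw [hCB] at hca
      have hpascal : N.choose (g + 1) = (N - 1).choose g + (N - 1).choose (g + 1) := by
        obtain ⟨n, rfl⟩ : ∃ n, N = n + 1 := ⟨N - 1, by omega⟩
        simpa using Nat.choose_succ_succ' n g
      omega
  · rw [if_neg hf]
    by_cases hfm : f < m
    · exact cohDim_zero_of_le (CY_le_CB hN (by omega))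
    · apply cohDim_zero_of_le
      have : cocycles N (OKP N m) (fun _ => True) f ≤ gradeV N (OKP N m) f :=
        inf_le_right
      rw [gradeV_bot (by omega)] at this
      intro ψ hψ
      have := this hψ
      rw [Submodule.mem_bot] at this
      rw [this]
      exact Submodule.zero_mem _

end MDim


/-! ### Periodic allowedness as a threshold condition -/

lemma cyc_dist {N : ℕ} (i j : Fin N) : cyc i ((j.1 + N - i.1) % N) = j := by
  have hN : 0 < N := i.pos
  have hi := i.isLt
  have hj := j.isLt
  apply Fin.ext
  show (i.1 + (j.1 + N - i.1) % N) % N = j.1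
  have h1 : (i.1 + (j.1 + N - i.1) % N) % N = (i.1 + (j.1 + N - i.1)) % N :=
    Nat.add_mod_mod _ _ _
  have h2 : i.1 + (j.1 + N - i.1) = j.1 + N := by omega
  rw [h1, h2, Nat.add_mod_right, Nat.mod_eq_of_lt hj]

lemma cyc_cyc {N : ℕ} (i : Fin N) (a b : ℕ) : cyc (cyc i a) b = cyc i (a + b) := by
  apply Fin.ext
  show ((i.1 + a) % N + b) % N = (i.1 + (a + b)) % N
  rw [Nat.mod_add_mod, Nat.add_assoc]

lemma mod_add_ne_self {N : ℕ} (hN : 0 < N) {a c : ℕ} (ha : a < N) (hc1 : 0 < c)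
    (hc2 : c < N) (h : (a + c) % N = a) : False := by
  rcases Nat.lt_or_ge (a + c) N with hlt | hge
  · rw [Nat.mod_eq_of_lt hlt] at h; omega
  · rw [Nat.mod_eq_sub_mod hge, Nat.mod_eq_of_lt (by omega)] at h; omega

lemma exists_false_of_lt {N : ℕ} {σ : Config N} (h : fermions σ < N) :
    ∃ j : Fin N, σ j = false := by
  by_contra hco
  push_neg at hco
  have huniv : (Finset.univ.filter fun i => σ i = true) = Finset.univ := by
    apply Finset.eq_univ_iff_forall.mpr
    intro x
    rw [Finset.mem_filter]
    refine ⟨Finset.mem_univ _, ?_⟩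
    cases hb : σ x
    · exact absurd hb (hco x)
    · rfl
  unfold fermions at h
  rw [huniv, Finset.card_univ, Fintype.card_fin] at h
  omega

lemma perOK_iff_le1 {N ℓ : ℕ} (hN : 0 < N) (hNl : N ≤ ℓ + 1) (σ : Config N) :
    PerOK N ℓ σ ↔ fermions σ ≤ N - 1 := by
  constructor
  · intro hp
    obtain ⟨k, hk, hkf⟩ := hp ⟨0, hN⟩
    have hne : (Finset.univ.filter fun i => σ i = true) ≠ Finset.univ := by
      intro h
      have hmem : cyc ⟨0, hN⟩ k ∈ Finset.univ.filter fun i => σ i = true := by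
        rw [h]; exact Finset.mem_univ _
      rw [Finset.mem_filter] at hmem
      rw [hmem.2] at hkf
      exact Bool.noConfusion hkf
    have hlt : fermions σ < N := by
      have hcc := (Finset.card_lt_iff_ne_univ (Finset.univ.filter fun i => σ i = true)).mpr hne
      rw [Fintype.card_fin] at hcc
      exact hcc
    omega
  · intro hf i
    have hlt : fermions σ < N := by omega
    obtain ⟨j, hj⟩ := exists_false_of_lt hlt
    refine ⟨(j.1 + N - i.1) % N, ?_, ?_⟩
    · have := Nat.mod_lt (j.1 + N - i.1) hN
      omega
    · rw [cyc_dist]; exact hj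

lemma perOK_iff_le2 {N ℓ : ℕ} (hl : 1 ≤ ℓ) (hNe : N = ℓ + 2) (σ : Config N) :
    PerOK N ℓ σ ↔ fermions σ ≤ ℓ := by
  have hN0 : 0 < N := by omega
  constructor
  · intro hp
    obtain ⟨k₁, hk₁, hj₁⟩ := hp ⟨0, hN0⟩
    obtain ⟨k₂, hk₂, hj₂⟩ := hp (cyc (cyc ⟨0, hN0⟩ k₁) 1)
    set j₁ := cyc ⟨0, hN0⟩ k₁ with hj₁def
    set j₂ := cyc (cyc j₁ 1) k₂ with hj₂def
    have hne : j₂ ≠ j₁ := by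
      intro he
      have h2 : j₂ = cyc j₁ (1 + k₂) := by rw [hj₂def, cyc_cyc]
      rw [he] at h2
      have h3 : (j₁.1 + (1 + k₂)) % N = j₁.1 := by
        conv_lhs => rw [show (j₁.1 + (1 + k₂)) % N = (cyc j₁ (1 + k₂)).1 from rfl]
        rw [← h2]
      exact mod_add_ne_self hN0 j₁.isLt (by omega) (by omega) h3
    have hsub : (Finset.univ.filter fun i => σ i = true) ⊆ Finset.univ \ {j₁, j₂} := by
      intro x hx
      rw [Finset.mem_filter] at hx
      rw [Finset.mem_sdiff]
      refine ⟨Finset.mem_univ _, ?_⟩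
      intro hmem
      rw [Finset.mem_insert, Finset.mem_singleton] at hmem
      rcases hmem with h | h <;> subst h
      · rw [hx.2] at hj₁; exact Bool.noConfusion hj₁
      · rw [hx.2] at hj₂; exact Bool.noConfusion hj₂
    have hcard := Finset.card_le_card hsub
    rw [Finset.card_sdiff_of_subset (Finset.subset_univ _), Finset.card_univ, Fintype.card_fin] at hcard
    have hpair : ({j₁, j₂} : Finset (Fin N)).card = 2 := by
      rw [Finset.card_insert_of_notMem (by rw [Finset.mem_singleton]; exact Ne.symm hne),
        Finset.card_singleton]
    rw [hpair] at hcard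
    show fermions σ ≤ ℓ
    unfold fermions
    omega
  · intro hf i
    have hcount : 2 ≤ (Finset.univ.filter fun x => σ x = false).card := by
      have hsplit := Finset.card_filter_add_card_filter_not
        (s := (Finset.univ : Finset (Fin N))) (p := fun x => σ x = true)
      have heqf : (Finset.univ.filter fun x => ¬ σ x = true)
          = (Finset.univ.filter fun x => σ x = false) := by
        apply Finset.filter_congr
        intro x _
        simp [Bool.not_eq_true]
      rw [heqf, Finset.card_univ, Fintype.card_fin] at hsplit
      have hferm : (Finset.univ.filter fun x => σ x = true).card = fermions σ := rfl
      omega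
    obtain ⟨j₁, hj₁m, j₂, hj₂m, hnej⟩ := (Finset.one_lt_card (s := Finset.univ.filter fun x => σ x = false)).mp (by omega)
    rw [Finset.mem_filter] at hj₁m hj₂m
    have hd1 : cyc i ((j₁.1 + N - i.1) % N) = j₁ := cyc_dist i j₁
    have hd2 : cyc i ((j₂.1 + N - i.1) % N) = j₂ := cyc_dist i j₂
    have hdne : (j₁.1 + N - i.1) % N ≠ (j₂.1 + N - i.1) % N := by
      intro h
      apply hnej
      rw [← hd1, ← hd2, h]
    have hd1lt : (j₁.1 + N - i.1) % N < N := Nat.mod_lt _ hN0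
    have hd2lt : (j₂.1 + N - i.1) % N < N := Nat.mod_lt _ hN0
    rcases le_or_gt ((j₁.1 + N - i.1) % N) ℓ with h | h
    · refine ⟨_, h, ?_⟩
      rw [hd1]; exact hj₁m.2
    · refine ⟨(j₂.1 + N - i.1) % N, by omega, ?_⟩
      rw [hd2]; exact hj₂m.2

end Aux

/-- Cohomology of short closed chains with periodic boundary conditions: for
`1 ≤ N ≤ ℓ+1` it is one-dimensional, concentrated at fermion number `N-1`; for
`N = ℓ+2` it is `(ℓ+1)`-dimensional, concentrated at fermion number `ℓ`. -/
theorem cohomology_periodic_short_chain (ℓ N : ℕ) (hℓ : 1 ≤ ℓ) :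
    (1 ≤ N → N ≤ ℓ + 1 →
      ∀ f, cohDim N (PerOK N ℓ) (fun _ => True) f = if f = N - 1 then 1 else 0) ∧
    (N = ℓ + 2 →
      ∀ f, cohDim N (PerOK N ℓ) (fun _ => True) f =
        if f = ℓ then ℓ + 1 else 0) := by
  constructor
  · intro hN1 hNl f
    have hpe : PerOK N ℓ = Aux.OKP N (N - 1) := by
      funext σ
      exact propext (Aux.perOK_iff_le1 hN1 hNl σ)
    rw [hpe, Aux.mainCoh (m := N - 1) hN1 f, Nat.choose_self]
  · intro hNe f
    subst hNe
    have hpe : PerOK (ℓ + 2) ℓ = Aux.OKP (ℓ + 2) ℓ := by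
      funext σ
      exact propext (Aux.perOK_iff_le2 hℓ rfl σ)
    rw [hpe, Aux.mainCoh (m := ℓ) (by omega) f]
    have h1 : ℓ + 2 - 1 = ℓ + 1 := rfl
    rw [h1, Nat.choose_succ_self_right]

end
end
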